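/- arXiv:2112.01140 — 4 statements merged into one kernel-verified Lean document; each statement's English description precedes it below -/
import Mathlib

section
/- Let G be a connected block graph, let v be a vertex of G, and let B be a block of G. Then there is a unique vertex x in B attaining the minimum distance from v to the vertices of B; that is, if x and y are vertices of B with d_G(v,x) = d_G(v,y) = min_{w ∈ V(B)} d_G(v,w), then x = y. -/
open SimpleGraph

variable {V : Type*}

/-- `x` is a cut vertex of `H`: removing `x` leaves two vertices with no path
between them (i.e. disconnects `H`). -/
def IsCutVertex {W : Type*} (H : SimpleGraph W) (x : W) : Prop :=
  ¬ (H.induce {y : W | y ≠ x}).Preconnected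

/-- A block of `G`: a maximal connected subgraph of `G` with no cut vertex. -/
def IsBlock (G : SimpleGraph V) (B : G.Subgraph) : Prop :=
  B.Connected ∧ (∀ x : B.verts, ¬ IsCutVertex B.coe x) ∧
    ∀ B' : G.Subgraph, B ≤ B' → B'.Connected →
      (∀ x : B'.verts, ¬ IsCutVertex B'.coe x) → B' = B

/-- A block graph: every block is a clique. -/
def IsBlockGraph (G : SimpleGraph V) : Prop :=
  ∀ B : G.Subgraph, IsBlock G B → G.IsClique B.verts

/-- `x` is a vertex of the block `B` at minimum distance from `v` in `G`. -/
def IsNearest (G : SimpleGraph V) (v : V) (B : G.Subgraph) (x : V) : Prop :=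
  x ∈ B.verts ∧ ∀ w ∈ B.verts, G.dist v x ≤ G.dist v w

/-- `T` is the graph `T(v,G)`: obtained from `G` by deleting, from every block `B`,
each edge of `B` not incident with the nearest vertex of `B` to `v`. -/
def IsTvG (G T : SimpleGraph V) (v : V) : Prop :=
  ∀ a b : V, T.Adj a b ↔ (G.Adj a b ∧
    ∀ B : G.Subgraph, IsBlock G B → B.Adj a b →
      (IsNearest G v B a ∨ IsNearest G v B b))

/-- A Steiner `S`-tree of `G`: a connected subgraph of `G` containing all vertices
of `S`, with the minimum number of edges among such subgraphs. -/
def IsSteinerTree (G : SimpleGraph V) (S : Set V) (T : G.Subgraph) : Prop :=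
  T.Connected ∧ S ⊆ T.verts ∧
    ∀ T' : G.Subgraph, T'.Connected → S ⊆ T'.verts →
      T.edgeSet.ncard ≤ T'.edgeSet.ncard

/-- The Steiner `k`-eccentricity of `v` in `G`: the maximum, over all `k`-subsets
`S` of `V(G)` with `v ∈ S`, of the number of edges of a Steiner `S`-tree. -/
noncomputable def steinerEcc (G : SimpleGraph V) (k : ℕ) (v : V) : ℕ :=
  sSup { n | ∃ S : Finset V, S.card = k ∧ v ∈ S ∧
    ∃ T : G.Subgraph, IsSteinerTree G ↑S T ∧ T.edgeSet.ncard = n }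

/-- A Steiner `k`-ecc `v`-tree: a Steiner `S`-tree, for some `k`-set `S` containing
`v`, whose number of edges realizes the Steiner `k`-eccentricity of `v`. -/
def IsSteinerKEccTree (G : SimpleGraph V) (k : ℕ) (v : V) (T₀ : G.Subgraph) : Prop :=
  ∃ S : Finset V, S.card = k ∧ v ∈ S ∧ IsSteinerTree G ↑S T₀ ∧
    T₀.edgeSet.ncard = steinerEcc G k v

/-- The Steiner distance of `S` in `G`. -/
noncomputable def steinerDist (G : SimpleGraph V) (S : Set V) : ℕ :=
  sInf { n | ∃ T : G.Subgraph, T.Connected ∧ S ⊆ T.verts ∧ T.edgeSet.ncard = n }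

namespace StAux

open Relation

variable {G : SimpleGraph V}


open Relation

variable {G : SimpleGraph V}

/-- reachability inside `H` avoiding the vertex `z`. -/
def AR (H : G.Subgraph) (z : V) : V → V → Prop :=
  Relation.ReflTransGen (fun a b => H.Adj a b ∧ a ≠ z ∧ b ≠ z)

lemma ar_symm {H : G.Subgraph} {z p q : V} (h : AR H z p q) : AR H z q p :=
  by
    haveI : Std.Symm (fun a b : V => H.Adj a b ∧ a ≠ z ∧ b ≠ z) :=
      ⟨fun _ _ hab => ⟨hab.1.symm, hab.2.2, hab.2.1⟩⟩
    exact Std.Symm.symm (r := ReflTransGen (fun a b : V => H.Adj a b ∧ a ≠ z ∧ b ≠ z)) _ _ h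

lemma ar_mono {H K : G.Subgraph} (hle : H ≤ K) {z p q : V} (h : AR H z p q) : AR K z p q :=
  ReflTransGen.mono (fun _ _ hab => ⟨hle.2 hab.1, hab.2⟩) _ _ h

lemma ar_ne {H : G.Subgraph} {z p q : V} (h : AR H z p q) (hp : p ≠ z) : q ≠ z := by
  induction h with
  | refl => exact hp
  | tail _ step _ => exact step.2.2

lemma reach_of_ar {H : G.Subgraph} {z : ↥H.verts} {p q : V} (h : AR H ↑z p q) :
    ∀ (hp : p ∈ H.verts) (hq : q ∈ H.verts)
      (hp' : (⟨p, hp⟩ : ↥H.verts) ∈ {y : ↥H.verts | y ≠ z})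
      (hq' : (⟨q, hq⟩ : ↥H.verts) ∈ {y : ↥H.verts | y ≠ z}),
      (H.coe.induce {y : ↥H.verts | y ≠ z}).Reachable ⟨⟨p, hp⟩, hp'⟩ ⟨⟨q, hq⟩, hq'⟩ := by
  induction h with
  | refl => intro hp hq _ _; rfl
  | @tail b c hpb step ih =>
    intro hp hq hp' hq'
    have hb : b ∈ H.verts := step.1.fst_mem
    have hb' : (⟨b, hb⟩ : ↥H.verts) ∈ {y : ↥H.verts | y ≠ z} :=
      fun e => step.2.1 (congrArg Subtype.val e)
    refine (ih hp hb hp' hb').trans (SimpleGraph.Adj.reachable ?_)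
    simp only [SimpleGraph.induce, comap_adj, Function.Embedding.coe_subtype,
      Subgraph.coe_adj]
    exact step.1

lemma ar_of_induce_walk {H : G.Subgraph} {z : ↥H.verts}
    {a b : ↥{y : ↥H.verts | y ≠ z}}
    (w : (H.coe.induce {y : ↥H.verts | y ≠ z}).Walk a b) :
    AR H ↑z (↑↑a) (↑↑b) := by
  induction w with
  | nil => exact ReflTransGen.refl
  | @cons a c d h _ ih =>
    refine ReflTransGen.head ⟨?_, ?_, ?_⟩ ih
    · simpa only [SimpleGraph.induce, comap_adj, Function.Embedding.coe_subtype,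
        Subgraph.coe_adj] using h
    · exact Subtype.coe_injective.ne a.2
    · exact Subtype.coe_injective.ne c.2

lemma not_cutVertex_of_ar {H : G.Subgraph} (z : ↥H.verts)
    (h : ∀ p q, p ∈ H.verts → q ∈ H.verts → p ≠ ↑z → q ≠ ↑z → AR H ↑z p q) :
    ¬ IsCutVertex H.coe z := by
  rw [IsCutVertex, not_not]
  rintro ⟨⟨p, hp⟩, hp'⟩ ⟨⟨q, hq⟩, hq'⟩
  have hpz : p ≠ ↑z := fun e => hp' (Subtype.ext e)
  have hqz : q ≠ ↑z := fun e => hq' (Subtype.ext e)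
  exact reach_of_ar (h p q hp hq hpz hqz) hp hq hp' hq'

lemma ar_of_not_cutVertex {H : G.Subgraph} (z : ↥H.verts) (hnc : ¬ IsCutVertex H.coe z)
    {p q : V} (hp : p ∈ H.verts) (hq : q ∈ H.verts) (hpz : p ≠ ↑z) (hqz : q ≠ ↑z) :
    AR H ↑z p q := by
  rw [IsCutVertex, not_not] at hnc
  obtain ⟨w⟩ := hnc ⟨⟨p, hp⟩, fun e => hpz (congrArg Subtype.val e)⟩
    ⟨⟨q, hq⟩, fun e => hqz (congrArg Subtype.val e)⟩
  exact ar_of_induce_walk w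

lemma ar0_of_coe_walk {H : G.Subgraph} {a b : ↥H.verts} (w : H.coe.Walk a b) :
    Relation.ReflTransGen H.Adj (↑a) (↑b) := by
  induction w with
  | nil => exact ReflTransGen.refl
  | @cons a c d h _ ih => exact ReflTransGen.head h ih

lemma ar0_of_connected {H : G.Subgraph} (h : H.Connected) {p q : V}
    (hp : p ∈ H.verts) (hq : q ∈ H.verts) : Relation.ReflTransGen H.Adj p q := by
  obtain ⟨w⟩ := h ⟨p, hp⟩ ⟨q, hq⟩
  exact ar0_of_coe_walk w

lemma ar_of_ar0 {H : G.Subgraph} {z p q : V} (hz : z ∉ H.verts)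
    (h : Relation.ReflTransGen H.Adj p q) : AR H z p q := by
  induction h with
  | refl => exact ReflTransGen.refl
  | tail _ step ih =>
    exact ReflTransGen.tail ih ⟨step, fun e => hz (e ▸ step.fst_mem),
      fun e => hz (e ▸ step.snd_mem)⟩

lemma ar_of_connected {H : G.Subgraph} (h : H.Connected) {z p q : V} (hz : z ∉ H.verts)
    (hp : p ∈ H.verts) (hq : q ∈ H.verts) : AR H z p q :=
  ar_of_ar0 hz (ar0_of_connected h hp hq)

lemma reach_coe_of_ar0 {H : G.Subgraph} {p q : V} (h : Relation.ReflTransGen H.Adj p q) :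
    ∀ (hp : p ∈ H.verts) (hq : q ∈ H.verts), H.coe.Reachable ⟨p, hp⟩ ⟨q, hq⟩ := by
  induction h with
  | refl => intro hp hq; rfl
  | @tail b c hpb step ih =>
    intro hp hq
    exact (ih hp step.fst_mem).trans (SimpleGraph.Adj.reachable (by simpa using step))

lemma connected_of_ar0 {H : G.Subgraph} (hne : H.verts.Nonempty)
    (h : ∀ p q, p ∈ H.verts → q ∈ H.verts → Relation.ReflTransGen H.Adj p q) :
    H.Connected := by
  rw [Subgraph.connected_iff]
  exact ⟨⟨fun a b => reach_coe_of_ar0 (h ↑a ↑b a.2 b.2) a.2 b.2⟩, hne⟩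

/-- connected and without cut vertices. -/
def Good (H : G.Subgraph) : Prop :=
  H.Connected ∧ ∀ x : ↥H.verts, ¬ IsCutVertex H.coe x

lemma Good.ar {H : G.Subgraph} (hH : Good H) {z p q : V}
    (hp : p ∈ H.verts) (hq : q ∈ H.verts) (hpz : p ≠ z) (hqz : q ≠ z) : AR H z p q := by
  by_cases hz : z ∈ H.verts
  · exact ar_of_not_cutVertex ⟨z, hz⟩ (hH.2 ⟨z, hz⟩) hp hq hpz hqz
  · exact ar_of_connected hH.1 hz hp hq

lemma Good.sup {H K : G.Subgraph} (hH : Good H) (hK : Good K) {s t : V}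
    (hsH : s ∈ H.verts) (hsK : s ∈ K.verts) (htH : t ∈ H.verts) (htK : t ∈ K.verts)
    (hst : s ≠ t) : Good (H ⊔ K) := by
  refine ⟨Subgraph.connected_sup hH.1.preconnected hK.1.preconnected ⟨s, by rw [Subgraph.verts_inf]; exact ⟨hsH, hsK⟩⟩, ?_⟩
  intro z
  refine not_cutVertex_of_ar z fun p q hp hq hpz hqz => ?_
  obtain ⟨c, hcz, hcH, hcK⟩ : ∃ c, c ≠ ↑z ∧ c ∈ H.verts ∧ c ∈ K.verts := by
    by_cases h' : s = ↑z
    · exact ⟨t, fun e => hst (h'.trans e.symm), htH, htK⟩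
    · exact ⟨s, h', hsH, hsK⟩
  have key : ∀ r, r ∈ (H ⊔ K).verts → r ≠ ↑z → AR (H ⊔ K) ↑z r c := by
    intro r hr hrz
    rw [Subgraph.verts_sup] at hr
    rcases hr with hr | hr
    · exact ar_mono le_sup_left (hH.ar hr hcH hrz hcz)
    · exact ar_mono le_sup_right (hK.ar hr hcK hrz hcz)
  exact (key p hp hpz).trans (ar_symm (key q hq hqz))



lemma ar_end_of_walk {u b : V} (W : G.Walk u b) {z : V}
    (hz : z ∉ W.support) : ∀ p ∈ W.support, AR W.toSubgraph z p b := by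
  induction W with
  | nil =>
    intro p hp
    rw [Walk.support_nil, List.mem_singleton] at hp
    subst hp; exact ReflTransGen.refl
  | @cons a c d h W ih =>
    rw [Walk.support_cons, List.mem_cons] at hz
    push_neg at hz
    intro p hp
    rw [Walk.support_cons, List.mem_cons] at hp
    rcases hp with rfl | hp
    · refine ReflTransGen.head ⟨?_, fun e => hz.1 e.symm,
        fun e => hz.2 (e ▸ W.start_mem_support)⟩
        (ar_mono le_sup_right (ih hz.2 c W.start_mem_support))
      simp [Walk.toSubgraph]
    · exact ar_mono le_sup_right (ih hz.2 p hp)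

lemma ar0_of_walk {u b : V} (W : G.Walk u b) :
    ∀ p ∈ W.support, Relation.ReflTransGen W.toSubgraph.Adj p b := by
  induction W with
  | nil =>
    intro p hp
    rw [Walk.support_nil, List.mem_singleton] at hp
    subst hp; exact ReflTransGen.refl
  | @cons a c d h W ih =>
    intro p hp
    rw [Walk.support_cons, List.mem_cons] at hp
    have hmono : ∀ {p' q'}, W.toSubgraph.Adj p' q' → (Walk.cons h W).toSubgraph.Adj p' q' :=
      fun hh => (le_sup_right : W.toSubgraph ≤ (Walk.cons h W).toSubgraph).2 hh
    rcases hp with rfl | hp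
    · exact ReflTransGen.head (by simp [Walk.toSubgraph])
        (ReflTransGen.mono (fun _ _ hh => hmono hh) _ _ (ih c W.start_mem_support))
    · exact ReflTransGen.mono (fun _ _ hh => hmono hh) _ _ (ih p hp)

lemma ar_split_of_path {u b : V} (W : G.Walk u b) (hW : W.IsPath) {z : V} :
    ∀ p ∈ W.support, p ≠ z → AR W.toSubgraph z p u ∨ AR W.toSubgraph z p b := by
  induction W with
  | nil =>
    intro p hp _
    rw [Walk.support_nil, List.mem_singleton] at hp
    subst hp; exact Or.inl ReflTransGen.refl
  | @cons a c d h W ih =>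
    intro p hp hpz
    rw [Walk.support_cons, List.mem_cons] at hp
    rcases hp with rfl | hp
    · exact Or.inl ReflTransGen.refl
    · by_cases hza : z = a
      · subst hza
        exact Or.inr (ar_mono le_sup_right
          (ar_end_of_walk W ((Walk.cons_isPath_iff _ _).mp hW).2 p hp))
      · rcases ih ((Walk.cons_isPath_iff _ _).mp hW).1 p hp hpz with h1 | h1
        · refine Or.inl (ReflTransGen.tail (ar_mono le_sup_right h1)
            ⟨?_, ar_ne h1 hpz, fun e => hza e.symm⟩)
          simp [Walk.toSubgraph]
        · exact Or.inr (ar_mono le_sup_right h1)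

lemma cycle_reach {u x y : V} (P : G.Walk u x) (Q : G.Walk u y)
    (hP : P.IsPath) (hQ : Q.IsPath) (hxy : G.Adj x y)
    (hI : ∀ w, w ∈ P.support → w ∈ Q.support → w = u)
    (hxQ : x ∉ Q.support) (hyP : y ∉ P.support)
    {z : V} (hzP : z ∈ P.support) :
    ∃ c, ∀ p, p ∈ P.support ∨ p ∈ Q.support → p ≠ z →
      AR (P.toSubgraph ⊔ Q.toSubgraph ⊔ G.subgraphOfAdj hxy) z p c := by
  set C := P.toSubgraph ⊔ Q.toSubgraph ⊔ G.subgraphOfAdj hxy with hC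
  have hPC : P.toSubgraph ≤ C := le_trans le_sup_left le_sup_left
  have hQC : Q.toSubgraph ≤ C := le_trans le_sup_right le_sup_left
  have heC : G.subgraphOfAdj hxy ≤ C := le_sup_right
  have hux : u ≠ x := fun e => hxQ (e ▸ Q.start_mem_support)
  have huy : u ≠ y := fun e => hyP (e ▸ P.start_mem_support)
  by_cases hzu : z = u
  · refine ⟨x, fun p hp hpz => ?_⟩
    have hyz : y ≠ z := fun e => huy ((e.trans hzu).symm)
    have hxz : x ≠ z := fun e => hux ((e.trans hzu).symm)
    rcases hp with hp | hp
    · rcases ar_split_of_path P hP p hp hpz with h1 | h1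
      · exact absurd hzu.symm (ar_ne h1 hpz)
      · exact ar_mono hPC h1
    · rcases ar_split_of_path Q hQ p hp hpz with h1 | h1
      · exact absurd hzu.symm (ar_ne h1 hpz)
      · exact ReflTransGen.tail (ar_mono hQC h1) ⟨heC.2 (by simp), hyz, hxz⟩
  · refine ⟨u, fun p hp hpz => ?_⟩
    have hzQ : z ∉ Q.support := fun hh => hzu (hI z hzP hh)
    have hyz : y ≠ z := fun e => hzQ (e ▸ Q.end_mem_support)
    have Qreach : ∀ p', p' ∈ Q.support → AR C z p' u := by
      intro p' hp'
      have h2 := ar_end_of_walk Q.reverse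
        (z := z) (by rwa [Walk.support_reverse, List.mem_reverse]) p'
        (by rwa [Walk.support_reverse, List.mem_reverse])
      rw [Walk.toSubgraph_reverse] at h2
      exact ar_mono hQC h2
    rcases hp with hp | hp
    · rcases ar_split_of_path P hP p hp hpz with h1 | h1
      · exact ar_mono hPC h1
      · exact (ReflTransGen.tail (ar_mono hPC h1)
          ⟨heC.2 (by simp), ar_ne h1 hpz, hyz⟩).trans (Qreach y Q.end_mem_support)
    · exact Qreach p hp

lemma cycle_good {u x y : V} (P : G.Walk u x) (Q : G.Walk u y)
    (hP : P.IsPath) (hQ : Q.IsPath) (hxy : G.Adj x y)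
    (hI : ∀ w, w ∈ P.support → w ∈ Q.support → w = u)
    (hxQ : x ∉ Q.support) (hyP : y ∉ P.support) :
    Good (P.toSubgraph ⊔ Q.toSubgraph ⊔ G.subgraphOfAdj hxy) := by
  set C := P.toSubgraph ⊔ Q.toSubgraph ⊔ G.subgraphOfAdj hxy with hC
  have hPC : P.toSubgraph ≤ C := le_trans le_sup_left le_sup_left
  have hQC : Q.toSubgraph ≤ C := le_trans le_sup_right le_sup_left
  have heC : G.subgraphOfAdj hxy ≤ C := le_sup_right
  have hverts : ∀ p, p ∈ C.verts → p ∈ P.support ∨ p ∈ Q.support := by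
    intro p hp
    simp only [hC, Subgraph.verts_sup, Set.mem_union, Walk.mem_verts_toSubgraph,
      subgraphOfAdj_verts, Set.mem_insert_iff, Set.mem_singleton_iff] at hp
    rcases hp with (hp | hp) | (rfl | rfl)
    · exact Or.inl hp
    · exact Or.inr hp
    · exact Or.inl P.end_mem_support
    · exact Or.inr Q.end_mem_support
  constructor
  · refine connected_of_ar0 ⟨u, hPC.1 (by simp [Walk.mem_verts_toSubgraph])⟩ ?_
    intro p q hp hq
    have hub : ∀ r, r ∈ P.support ∨ r ∈ Q.support → Relation.ReflTransGen C.Adj r x := by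
      intro r hr
      rcases hr with hr | hr
      · exact ReflTransGen.mono (fun _ _ hh => hPC.2 hh) _ _ (ar0_of_walk P r hr)
      · exact ReflTransGen.tail
          (ReflTransGen.mono (fun _ _ hh => hQC.2 hh) _ _ (ar0_of_walk Q r hr))
          (heC.2 (by simp))
    exact (hub p (hverts p hp)).trans
      (by
          haveI : Std.Symm C.Adj := ⟨fun _ _ hh => Subgraph.Adj.symm hh⟩
          exact Std.Symm.symm (r := ReflTransGen C.Adj) _ _ (hub q (hverts q hq)))
  · intro z
    refine not_cutVertex_of_ar z fun p q hp hq hpz hqz => ?_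
    rcases hverts ↑z z.2 with hz | hz
    · obtain ⟨c, hc⟩ := cycle_reach P Q hP hQ hxy hI hxQ hyP hz
      exact (hc p (hverts p hp) hpz).trans (ar_symm (hc q (hverts q hq) hqz))
    · obtain ⟨c, hc⟩ := cycle_reach Q P hQ hP hxy.symm (fun w hw hw' => hI w hw' hw)
        hyP hxQ hz
      have hle : Q.toSubgraph ⊔ P.toSubgraph ⊔ G.subgraphOfAdj hxy.symm ≤ C := by
        rw [subgraphOfAdj_symm hxy]
        exact sup_le (sup_le hQC hPC) heC
      exact (ar_mono hle (hc p (hverts p hp).symm hpz)).trans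
        (ar_symm (ar_mono hle (hc q (hverts q hq).symm hqz)))


lemma split_dist [DecidableEq V] (hG : G.Connected) {v x u : V} (P : G.Walk v x)
    (hlen : P.length = G.dist v x) (hu : u ∈ P.support) :
    (P.takeUntil u hu).length = G.dist v u ∧ (P.dropUntil u hu).length = G.dist u x := by
  have h1 := SimpleGraph.dist_le (P.takeUntil u hu)
  have h2 := SimpleGraph.dist_le (P.dropUntil u hu)
  have hsum : (P.takeUntil u hu).length + (P.dropUntil u hu).length = P.length := by
    rw [← Walk.length_append, Walk.take_spec]
  have htri : G.dist v x ≤ G.dist v u + G.dist u x := hG.dist_triangle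
  omega


end StAux

open StAux in
/-- In a connected block graph, every block has a unique vertex
nearest to a given vertex `v`. -/
theorem steiner_stmt_0 [Fintype V] (G : SimpleGraph V) (hG : G.Connected)
    (hBG : IsBlockGraph G) (v : V) (B : G.Subgraph) (hB : IsBlock G B)
    (x y : V) (hx : IsNearest G v B x) (hy : IsNearest G v B y) : x = y := by
  classical
  by_contra hne
  have hd_eq : G.dist v x = G.dist v y := le_antisymm (hx.2 y hy.1) (hy.2 x hx.1)
  by_cases hd0 : G.dist v x = 0
  · exact hne ((hG.dist_eq_zero_iff.mp hd0).symm.trans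
      (hG.dist_eq_zero_iff.mp (hd_eq ▸ hd0)))
  · have hadj : G.Adj x y := hBG B hB hx.1 hy.1 hne
    obtain ⟨P, hPlen⟩ := SimpleGraph.exists_walk_of_dist_ne_zero hd0
    have hd0' : G.dist v y ≠ 0 := hd_eq ▸ hd0
    obtain ⟨Q, hQlen⟩ := SimpleGraph.exists_walk_of_dist_ne_zero hd0'
    set S : Set V := {w | w ∈ P.support ∧ w ∈ Q.support} with hS
    obtain ⟨u, huS, humax⟩ := Set.Finite.exists_maximalFor (fun w => G.dist v w) S (Set.toFinite S)
      ⟨v, P.start_mem_support, Q.start_mem_support⟩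
    have hmax' : ∀ w ∈ S, G.dist v w ≤ G.dist v u := by
      intro w hw
      rcases le_total (G.dist v w) (G.dist v u) with h | h
      · exact h
      · exact humax hw h
    obtain ⟨htakeP, hdropP⟩ := split_dist hG P hPlen huS.1
    obtain ⟨htakeQ, hdropQ⟩ := split_dist hG Q hQlen huS.2
    set P₂ := P.dropUntil u huS.1 with hP₂
    set Q₂ := Q.dropUntil u huS.2 with hQ₂
    have hsumP : G.dist v u + G.dist u x = G.dist v x := by
      have h := congrArg SimpleGraph.Walk.length (P.take_spec huS.1)
      rw [Walk.length_append] at h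
      rw [← hP₂] at h
      omega
    have hsumQ : G.dist v u + G.dist u y = G.dist v x := by
      have h := congrArg SimpleGraph.Walk.length (Q.take_spec huS.2)
      rw [Walk.length_append] at h
      rw [← hQ₂] at h
      omega
    have hune_x : G.dist u x ≠ 0 := by
      intro h0
      have hux : u = x := hG.dist_eq_zero_iff.mp h0
      have h1 : G.dist u y = 0 := by omega
      exact hne (hux ▸ hG.dist_eq_zero_iff.mp h1)
    have hune_y : G.dist u y ≠ 0 := by
      intro h0
      have huy : u = y := hG.dist_eq_zero_iff.mp h0
      have h1 : G.dist u x = 0 := by omega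
      exact hne ((hG.dist_eq_zero_iff.mp h1).symm.trans huy)
    have hux : u ≠ x := fun e => hune_x (by rw [e, SimpleGraph.dist_self])
    have huy : u ≠ y := fun e => hune_y (by rw [e, SimpleGraph.dist_self])
    have hI : ∀ w, w ∈ P₂.support → w ∈ Q₂.support → w = u := by
      intro w hwP hwQ
      have hwP0 : w ∈ P.support := P.support_dropUntil_subset huS.1 hwP
      have hwQ0 : w ∈ Q.support := Q.support_dropUntil_subset huS.2 hwQ
      obtain ⟨ht2, hd2⟩ := split_dist hG P₂ hdropP hwP
      have hsum2 : G.dist u w + G.dist w x = G.dist u x := by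
        have h := congrArg SimpleGraph.Walk.length (P₂.take_spec hwP)
        rw [Walk.length_append] at h
        omega
      have hle1 : G.dist v w ≤ G.dist v u + G.dist u w := hG.dist_triangle
      have hge : G.dist v x ≤ G.dist v w + G.dist w x := hG.dist_triangle
      have hwle := hmax' w ⟨hwP0, hwQ0⟩
      have h0 : G.dist u w = 0 := by omega
      exact (hG.dist_eq_zero_iff.mp h0).symm
    have hxQ₂ : x ∉ Q₂.support := fun hh => hux (hI x P₂.end_mem_support hh).symm
    have hyP₂ : y ∉ P₂.support := fun hh => huy (hI y hh Q₂.end_mem_support).symm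
    have hP₂path : P₂.IsPath := P₂.isPath_of_length_eq_dist hdropP
    have hQ₂path : Q₂.IsPath := Q₂.isPath_of_length_eq_dist hdropQ
    have hCgood := cycle_good P₂ Q₂ hP₂path hQ₂path hadj hI hxQ₂ hyP₂
    set C := P₂.toSubgraph ⊔ Q₂.toSubgraph ⊔ G.subgraphOfAdj hadj with hC
    have hxC : x ∈ C.verts := by
      rw [hC, Subgraph.verts_sup]
      exact Or.inl (by rw [Subgraph.verts_sup]
                       exact Or.inl (by simp [Walk.mem_verts_toSubgraph]))
    have hyC : y ∈ C.verts := by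
      rw [hC, Subgraph.verts_sup]
      exact Or.inl (by rw [Subgraph.verts_sup]
                       exact Or.inr (by simp [Walk.mem_verts_toSubgraph]))
    have huC : u ∈ C.verts := by
      rw [hC, Subgraph.verts_sup]
      exact Or.inl (by rw [Subgraph.verts_sup]
                       exact Or.inl (by simp [Walk.mem_verts_toSubgraph]))
    have hBgood : Good B := ⟨hB.1, hB.2.1⟩
    have hsupG := hCgood.sup hBgood hxC hx.1 hyC hy.1 hne
    have heq : C ⊔ B = B := hB.2.2 (C ⊔ B) le_sup_right hsupG.1 hsupG.2
    have huB : u ∈ B.verts := by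
      have h1 : u ∈ (C ⊔ B).verts := by rw [Subgraph.verts_sup]; exact Or.inl huC
      rwa [heq] at h1
    have hfin := hx.2 u huB
    omega
end

section
/- Let G be a connected block graph and v ∈ V(G). Let T(v,G) be the spanning subgraph of G obtained by deleting, from every block B of G, each edge of B that is not incident with Near_G(v,B), where Near_G(v,B) is the (unique) vertex of B nearest to v. Then T(v,G) is a spanning tree of G (it is connected and acyclic and contains all vertices of G). -/
open SimpleGraph

variable {V : Type*}

section AuxProof

open SimpleGraph Walk

lemma aux_mem_edge_of_mem_support {G : SimpleGraph V} {u w : V} (p : G.Walk u w)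
    (hnil : ¬ p.Nil) {z : V} (hz : z ∈ p.support) : ∃ e ∈ p.edges, z ∈ e := by
  induction p with
  | nil => simp at hnil
  | @cons u u' w h q ih =>
    rw [support_cons, List.mem_cons] at hz
    rcases hz with rfl | hz
    · exact ⟨s(z, u'), by simp, by simp⟩
    · by_cases hq : q.Nil
      · have : z = u' := by
          cases q with
          | nil => simpa using hz
          | cons h' q' => simp at hq
        exact ⟨s(u, u'), by simp, by simp [this]⟩
      · obtain ⟨e, he, hze⟩ := ih hq hz
        exact ⟨e, by simp [he], hze⟩

lemma aux_mem_support_of_edge {G : SimpleGraph V} {u w : V} (p : G.Walk u w)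
    {e : Sym2 V} {z : V} (he : e ∈ p.edges) (hz : z ∈ e) : z ∈ p.support := by
  induction e with
  | _ a b =>
    rcases Sym2.mem_iff.mp hz with rfl | rfl
    · exact p.fst_mem_support_of_mem_edges he
    · exact p.snd_mem_support_of_mem_edges he

lemma aux_dist_add {G : SimpleGraph V} (hG : G.Connected) {u w : V} (p : G.Walk u w)
    (hp : p.length = G.dist u w) {z : V} (hz : z ∈ p.support) :
    G.dist u z + G.dist z w = G.dist u w := by
  classical
  have h1 : G.dist u z ≤ (p.takeUntil z hz).length := dist_le _
  have h2 : G.dist z w ≤ (p.dropUntil z hz).length := dist_le _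
  have h3 : (p.takeUntil z hz).length + (p.dropUntil z hz).length = p.length := by
    rw [← length_append, take_spec]
  have h4 := hG.dist_triangle (u := u) (v := z) (w := w)
  omega

lemma aux_dist_ne {G : SimpleGraph V} (hG : G.Connected) {u w : V} (p : G.Walk u w)
    (hp : p.length = G.dist u w) {a b : V} (he : s(a, b) ∈ p.edges) :
    G.dist u a ≠ G.dist u b := by
  induction p with
  | nil => simp at he
  | @cons u u' w h q ih =>
    have hql : q.length = G.dist u' w := by
      have h1 : G.dist u' w ≤ q.length := dist_le q
      have h2 : G.dist u w ≤ G.dist u u' + G.dist u' w := hG.dist_triangle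
      have h3 : G.dist u u' ≤ 1 := by
        have := dist_le (Walk.cons h Walk.nil : G.Walk u u')
        simpa using this
      rw [length_cons] at hp
      omega
    rw [edges_cons, List.mem_cons] at he
    have hpos : 0 < G.dist u u' := (hG.preconnected u u').pos_dist_of_ne h.ne
    rcases he with he | he
    · rw [Sym2.eq_iff] at he
      have hds : G.dist u u = 0 := by simp
      rcases he with ⟨rfl, rfl⟩ | ⟨rfl, rfl⟩ <;> omega
    · have key : ∀ x ∈ q.support, G.dist u x = G.dist u' x + 1 := by
        intro x hx
        have e1 := aux_dist_add hG (Walk.cons h q) hp (by rw [support_cons]; exact List.mem_cons_of_mem _ hx)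
        have e2 := aux_dist_add hG q hql hx
        rw [length_cons] at hp
        omega
      rw [key a (q.fst_mem_support_of_mem_edges he), key b (q.snd_mem_support_of_mem_edges he)]
      have := ih hql he
      omega

lemma aux_edge_level {G : SimpleGraph V} (hG : G.Connected) {u w : V} (p : G.Walk u w)
    (hp : p.length = G.dist u w) {a b : V} (he : s(a, b) ∈ p.edges) :
    G.dist u a + 1 = G.dist u b ∨ G.dist u b + 1 = G.dist u a := by
  have hne := aux_dist_ne hG p hp he
  have hadj : G.Adj a b := p.adj_of_mem_edges he
  have h1 : G.dist u b ≤ G.dist u a + 1 := by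
    have := hG.dist_triangle (u := u) (v := a) (w := b)
    have h2 : G.dist a b ≤ 1 := by simpa using dist_le (Walk.cons hadj Walk.nil : G.Walk a b)
    omega
  have h2 : G.dist u a ≤ G.dist u b + 1 := by
    have := hG.dist_triangle (u := u) (v := b) (w := a)
    have h3 : G.dist b a ≤ 1 := by simpa using dist_le (Walk.cons hadj.symm Walk.nil : G.Walk b a)
    omega
  omega

lemma aux_end_mem_tail_support {G : SimpleGraph V} {a b : V} (p : G.Walk a b)
    (hnil : ¬ p.Nil) : b ∈ p.support.tail := by
  obtain ⟨u, h, q, rfl⟩ := not_nil_iff.mp hnil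
  simpa using q.end_mem_support

lemma aux_two_edges {G : SimpleGraph V} {u : V} (c : G.Walk u u) (hc : c.IsCycle)
    {z : V} (hz : z ∈ c.support) :
    ∃ w w', w ≠ w' ∧ s(z, w) ∈ c.edges ∧ s(z, w') ∈ c.edges := by
  classical
  set c' := c.rotate z hz with hc'def
  have hc' : c'.IsCycle := hc.rotate hz
  have hperm : List.Perm c'.edges c.edges := (c.rotate_edges z hz).perm
  have h3 := hc'.three_le_length
  obtain ⟨w, hadj, q0, hq0⟩ := not_nil_iff.mp hc'.not_nil
  have hcyc : (Walk.cons hadj q0).IsCycle := hq0 ▸ hc'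
  have hq0p : q0.IsPath := ((Walk.cons_isCycle_iff q0 hadj).mp hcyc).1
  have hq0len : 2 ≤ q0.length := by
    have : c'.length = q0.length + 1 := by rw [hq0]; simp
    omega
  have hq0rnil : ¬ q0.reverse.Nil := by
    rw [nil_iff_length_eq, length_reverse]; omega
  obtain ⟨w', hadj2, r, hr⟩ := not_nil_iff.mp hq0rnil
  have he2 : s(z, w') ∈ q0.edges := by
    have : s(z, w') ∈ q0.reverse.edges := by rw [hr]; simp
    rw [edges_reverse, List.mem_reverse] at this
    exact this
  have he1 : s(z, w) ∈ c'.edges := by rw [hq0]; simp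
  have he2' : s(z, w') ∈ c'.edges := by rw [hq0, edges_cons]; exact List.mem_cons_of_mem _ he2
  refine ⟨w, w', ?_, hperm.subset he1, hperm.subset he2'⟩
  rintro rfl
  -- now r : G.Walk w w
  have hrp : r.IsPath := by
    have := hq0p.reverse
    rw [hr] at this
    exact this.of_cons
  have hrnil : ¬ r.Nil := by
    rw [nil_iff_length_eq]
    intro h0
    have : q0.reverse.length = r.length + 1 := by rw [hr]; simp
    rw [length_reverse] at this
    omega
  have hmem : w ∈ r.support.tail := aux_end_mem_tail_support r hrnil
  have hnd : r.support.Nodup := hrp.support_nodup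
  rw [r.support_eq_cons] at hnd
  exact (List.nodup_cons.mp hnd).1 hmem

lemma aux_cycle_of_two_paths {G : SimpleGraph V} {a b : V} {P Q : G.Walk a b}
    (hP : P.IsPath) (hQ : Q.IsPath) (hne : P ≠ Q) :
    ∃ (u : V) (c : G.Walk u u), c.IsCycle ∧ ∀ e ∈ c.edges, e ∈ P.edges ∨ e ∈ Q.edges := by
  classical
  set G' : SimpleGraph V := SimpleGraph.fromEdgeSet {e | e ∈ P.edges ∨ e ∈ Q.edges} with hG'
  have hsub : ∀ e, e ∈ G'.edgeSet → e ∈ G.edgeSet := by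
    intro e he
    rw [hG', edgeSet_fromEdgeSet] at he
    rcases he.1 with h | h
    · exact P.edges_subset_edgeSet h
    · exact Q.edges_subset_edgeSet h
  have hPe : ∀ e ∈ P.edges, e ∈ G'.edgeSet := by
    intro e he
    rw [hG', edgeSet_fromEdgeSet]
    exact ⟨Or.inl he, G.not_isDiag_of_mem_edgeSet (P.edges_subset_edgeSet he)⟩
  have hQe : ∀ e ∈ Q.edges, e ∈ G'.edgeSet := by
    intro e he
    rw [hG', edgeSet_fromEdgeSet]
    exact ⟨Or.inr he, G.not_isDiag_of_mem_edgeSet (Q.edges_subset_edgeSet he)⟩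
  have hna : ¬ G'.IsAcyclic := by
    intro hA
    have := hA.path_unique ⟨P.transfer G' hPe, hP.transfer hPe⟩ ⟨Q.transfer G' hQe, hQ.transfer hQe⟩
    apply hne
    have h2 := congrArg (fun (p : G'.Path a b) => (p : G'.Walk a b).transfer G
      (fun e he' => hsub e ((p : G'.Walk a b).edges_subset_edgeSet he'))) this
    simpa [Walk.transfer_transfer, Walk.transfer_self] using h2
  rw [IsAcyclic] at hna
  push_neg at hna
  obtain ⟨u, c0, hc0⟩ := hna
  refine ⟨u, c0.transfer G (fun e he => hsub e (c0.edges_subset_edgeSet he)), hc0.transfer _, ?_⟩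
  intro e he
  rw [edges_transfer] at he
  have := c0.edges_subset_edgeSet he
  rw [hG', edgeSet_fromEdgeSet] at this
  exact this.1

lemma aux_finite_subgraph [Finite V] (G : SimpleGraph V) : Finite G.Subgraph := by
  have : Function.Injective (fun B : G.Subgraph => (B.verts, B.Adj)) := by
    intro B1 B2 h
    rw [Prod.mk.injEq] at h
    exact Subgraph.ext h.1 h.2
  exact Finite.of_injective _ this

lemma aux_exists_block [Finite V] {G : SimpleGraph V} (H : G.Subgraph) (hc : H.Connected)
    (hnc : ∀ x : H.verts, ¬ IsCutVertex H.coe x) : ∃ B, IsBlock G B ∧ H ≤ B := by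
  haveI := aux_finite_subgraph G
  set S : Set G.Subgraph :=
    {K | H ≤ K ∧ K.Connected ∧ ∀ x : K.verts, ¬ IsCutVertex K.coe x} with hS
  obtain ⟨B, hBS, hmax⟩ := Set.Finite.exists_maximalFor id S S.toFinite
    ⟨H, le_refl H, hc, hnc⟩
  exact ⟨B, ⟨hBS.2.1, hBS.2.2, fun B' hle hc' hnc' =>
    le_antisymm (hmax ⟨hBS.1.trans hle, hc', hnc'⟩ hle) hle⟩, hBS.1⟩

lemma aux_single_edge_nocut {G : SimpleGraph V} {a b : V} (h : G.Adj a b) :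
    ∀ x : (G.subgraphOfAdj h).verts, ¬ IsCutVertex (G.subgraphOfAdj h).coe x := by
  intro x hcut
  apply hcut
  intro p q
  have hmem : ∀ y : ↥{y : ↥(G.subgraphOfAdj h).verts | y ≠ x},
      (y : V) = a ∨ (y : V) = b := by
    intro y
    have hy := y.1.2
    simp only [subgraphOfAdj_verts, Set.mem_insert_iff, Set.mem_singleton_iff] at hy
    exact hy
  have hx : (x : V) = a ∨ (x : V) = b := by
    have hx := x.2
    simp only [subgraphOfAdj_verts, Set.mem_insert_iff, Set.mem_singleton_iff] at hx
    exact hx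
  have : p = q := by
    have hp := hmem p
    have hq := hmem q
    have hpx : (p : V) ≠ (x : V) := fun hh => p.2 (Subtype.ext hh)
    have hqx : (q : V) ≠ (x : V) := fun hh => q.2 (Subtype.ext hh)
    apply Subtype.ext; apply Subtype.ext
    rcases hx with hx | hx <;> rcases hp with hp | hp <;> rcases hq with hq | hq <;>
      simp_all
  rw [this]

lemma aux_block_adj {G : SimpleGraph V} {B : G.Subgraph} (hB : IsBlock G B) {a b : V}
    (ha : a ∈ B.verts) (hb : b ∈ B.verts) (hab : G.Adj a b) : B.Adj a b := by
  set B' : G.Subgraph :=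
    { verts := B.verts
      Adj := fun p q => B.Adj p q ∨ (G.Adj p q ∧ p ∈ B.verts ∧ q ∈ B.verts)
      adj_sub := fun h => h.elim (fun h' => h'.adj_sub) (fun h' => h'.1)
      edge_vert := fun h => h.elim (fun h' => h'.fst_mem) (fun h' => h'.2.1)
      symm := ⟨fun p q h => h.elim (fun h' => Or.inl h'.symm)
        (fun h' => Or.inr ⟨h'.1.symm, h'.2.2, h'.2.1⟩)⟩ } with hB'def
  have hle : B ≤ B' := ⟨subset_rfl, fun {p q} h => Or.inl h⟩
  have hcoe : B.coe ≤ B'.coe := fun {p q} h => Or.inl h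
  have hconn : B'.Connected := hB.1.mono hle rfl
  have hnc : ∀ x : B'.verts, ¬ IsCutVertex B'.coe x := by
    intro x hcut
    apply hcut
    have hpre : (B.coe.induce {y : ↥B.verts | y ≠ x}).Preconnected :=
      not_not.mp (hB.2.1 x)
    intro p q
    exact (hpre p q).mono (fun y z hyz => hcoe hyz)
  have heq : B' = B := hB.2.2 B' hle hconn hnc
  have : B'.Adj a b := Or.inr ⟨hab, ha, hb⟩
  rwa [heq] at this

lemma aux_block_eq [Finite V] {G : SimpleGraph V} (hBG : IsBlockGraph G)
    {B₁ B₂ : G.Subgraph} (h1 : IsBlock G B₁) (h2 : IsBlock G B₂) {x y : V} (hxy : x ≠ y)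
    (hx1 : x ∈ B₁.verts) (hy1 : y ∈ B₁.verts) (hx2 : x ∈ B₂.verts) (hy2 : y ∈ B₂.verts) :
    B₁ = B₂ := by
  classical
  have hadj1 : ∀ p q : V, p ∈ B₁.verts → q ∈ B₁.verts → p ≠ q → B₁.Adj p q :=
    fun p q hp hq hne => aux_block_adj h1 hp hq (hBG B₁ h1 hp hq hne)
  have hadj2 : ∀ p q : V, p ∈ B₂.verts → q ∈ B₂.verts → p ≠ q → B₂.Adj p q :=
    fun p q hp hq hne => aux_block_adj h2 hp hq (hBG B₂ h2 hp hq hne)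
  have hconn : (B₁ ⊔ B₂).Connected := Subgraph.connected_sup h1.1.preconnected h2.1.preconnected ⟨x, hx1, hx2⟩
  have hnc : ∀ u : (B₁ ⊔ B₂).verts, ¬ IsCutVertex (B₁ ⊔ B₂).coe u := by
    intro u hcut
    apply hcut
    set Γ := ((B₁ ⊔ B₂).coe.induce {w : ↥(B₁ ⊔ B₂).verts | w ≠ u}) with hΓ
    have hne_of_ne : ∀ p q : ↥{w : ↥(B₁ ⊔ B₂).verts | w ≠ u}, p ≠ q → (p : V) ≠ (q : V) := by
      intro p q hpq h
      exact hpq (Subtype.ext (Subtype.ext h))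
    have reach1 : ∀ p q : ↥{w : ↥(B₁ ⊔ B₂).verts | w ≠ u},
        (p : V) ∈ B₁.verts → (q : V) ∈ B₁.verts → Γ.Reachable p q := by
      intro p q hp hq
      by_cases hpq : p = q
      · rw [hpq]
      · exact SimpleGraph.Adj.reachable
          (Or.inl (hadj1 _ _ hp hq (hne_of_ne p q hpq)) :
            (B₁ ⊔ B₂).Adj (p : V) (q : V))
    have reach2 : ∀ p q : ↥{w : ↥(B₁ ⊔ B₂).verts | w ≠ u},
        (p : V) ∈ B₂.verts → (q : V) ∈ B₂.verts → Γ.Reachable p q := by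
      intro p q hp hq
      by_cases hpq : p = q
      · rw [hpq]
      · exact SimpleGraph.Adj.reachable
          (Or.inr (hadj2 _ _ hp hq (hne_of_ne p q hpq)) :
            (B₁ ⊔ B₂).Adj (p : V) (q : V))
    -- pivot
    set z : V := if x = (u : V) then y else x with hz
    have hz1 : z ∈ B₁.verts := by rw [hz]; split <;> assumption
    have hz2 : z ∈ B₂.verts := by rw [hz]; split <;> assumption
    have hzu : z ≠ (u : V) := by
      rw [hz]; split
      · rename_i hh; rw [← hh]; exact hxy.symm
      · assumption
    set zz : ↥{w : ↥(B₁ ⊔ B₂).verts | w ≠ u} :=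
      ⟨⟨z, Or.inl hz1⟩, fun hh => hzu (congrArg Subtype.val hh)⟩ with hzz
    intro p q
    have hp := p.1.2
    have hq := q.1.2
    have step : ∀ r : ↥{w : ↥(B₁ ⊔ B₂).verts | w ≠ u}, Γ.Reachable r zz := by
      intro r
      rcases r.1.2 with hr | hr
      · exact reach1 r zz hr hz1
      · exact reach2 r zz hr hz2
    exact (step p).trans (step q).symm
  have e1 : B₁ ⊔ B₂ = B₁ := h1.2.2 _ le_sup_left hconn hnc
  have hle : B₂ ≤ B₁ := le_sup_right.trans e1.le
  exact (h2.2.2 B₁ hle h1.1 h1.2.1)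

lemma aux_cycle_nocut {G : SimpleGraph V} {u : V} (c : G.Walk u u) (hc : c.IsCycle) :
    ∀ x : c.toSubgraph.verts, ¬ IsCutVertex c.toSubgraph.coe x := by
  classical
  intro x hcut
  apply hcut
  have hx : (x : V) ∈ c.support := (c.mem_verts_toSubgraph).mp x.2
  set c' := c.rotate (x : V) hx with hc'def
  have hc' : c'.IsCycle := hc.rotate hx
  have hsub : c'.toSubgraph = c.toSubgraph := c.toSubgraph_rotate hx
  obtain ⟨w, hadj, q0, hq0⟩ := not_nil_iff.mp hc'.not_nil
  have hcyc : (Walk.cons hadj q0).IsCycle := hq0 ▸ hc'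
  have hq0p : q0.IsPath := ((Walk.cons_isCycle_iff q0 hadj).mp hcyc).1
  have hq0len : 2 ≤ q0.length := by
    have h3 := hc'.three_le_length
    have : c'.length = q0.length + 1 := by rw [hq0]; simp
    omega
  have hq0rnil : ¬ q0.reverse.Nil := by
    rw [nil_iff_length_eq, length_reverse]; omega
  obtain ⟨w', hadj2, r, hr⟩ := not_nil_iff.mp hq0rnil
  set q' : G.Walk w w' := r.reverse with hq'def
  have hq0' : q0 = q'.concat hadj2.symm := by
    have h := congrArg Walk.reverse hr
    rw [reverse_reverse] at h
    rw [h, reverse_cons, hq'def, concat_eq_append]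
  have hxs : (x : V) ∉ q'.support := by
    have hnd : q0.support.Nodup := hq0p.support_nodup
    rw [hq0', support_concat] at hnd
    rw [List.nodup_append] at hnd
    intro hmem
    exact hnd.2.2 _ hmem _ (by simp) rfl
  have hmemq' : ∀ z : V, z ∈ c.toSubgraph.verts → z ≠ (x : V) → z ∈ q'.support := by
    intro z hz hne
    have hz' : z ∈ c'.support := (c'.mem_verts_toSubgraph).mp (by rw [hsub]; exact hz)
    rw [hq0, support_cons, List.mem_cons] at hz'
    rcases hz' with rfl | hz'
    · exact absurd rfl hne
    · rw [hq0', support_concat, List.mem_append] at hz'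
      rcases hz' with hz' | hz'
      · exact hz'
      · simp at hz'; exact absurd hz' hne
  have hle : q'.toSubgraph ≤ c.toSubgraph := by
    rw [← hsub, hq0]
    have h1 : q'.toSubgraph ≤ q0.toSubgraph := by
      rw [hq0', concat_eq_append, toSubgraph_append]
      exact le_sup_left
    have h2 : q0.toSubgraph ≤ (Walk.cons hadj q0).toSubgraph := by
      simp only [Walk.toSubgraph]
      exact le_sup_right
    exact h1.trans h2
  set f : ↥q'.toSubgraph.verts → ↥{w : ↥c.toSubgraph.verts | w ≠ x} := fun z =>
    ⟨⟨(z : V), hle.1 z.2⟩, by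
      intro hh
      apply hxs
      have : (z : V) = (x : V) := congrArg Subtype.val hh
      rw [← this]
      exact (q'.mem_verts_toSubgraph).mp z.2⟩ with hfdef
  have hf : ∀ a b : ↥q'.toSubgraph.verts, q'.toSubgraph.coe.Adj a b →
      (c.toSubgraph.coe.induce {w : ↥c.toSubgraph.verts | w ≠ x}).Adj (f a) (f b) := by
    intro a b hab
    exact hle.2 hab
  intro p q
  have hp' : (p : V) ∈ q'.support :=
    hmemq' _ p.1.2 (fun hh => p.2 (Subtype.ext hh))
  have hq' : (q : V) ∈ q'.support :=
    hmemq' _ q.1.2 (fun hh => q.2 (Subtype.ext hh))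
  have hreach : q'.toSubgraph.coe.Reachable ⟨(p : V), (q'.mem_verts_toSubgraph).mpr hp'⟩
      ⟨(q : V), (q'.mem_verts_toSubgraph).mpr hq'⟩ :=
    (q'.toSubgraph_connected).coe ⟨(p : V), (q'.mem_verts_toSubgraph).mpr hp'⟩ _
  set F : q'.toSubgraph.coe →g (c.toSubgraph.coe.induce {w : ↥c.toSubgraph.verts | w ≠ x}) :=
    ⟨f, fun {a b} h => hf a b h⟩ with hF
  have hmap := hreach.map F
  have hfp : F ⟨(p : V), (q'.mem_verts_toSubgraph).mpr hp'⟩ = p := by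
    apply Subtype.ext; apply Subtype.ext; rfl
  have hfq : F ⟨(q : V), (q'.mem_verts_toSubgraph).mpr hq'⟩ = q := by
    apply Subtype.ext; apply Subtype.ext; rfl
  rwa [hfp, hfq] at hmap

lemma aux_block_of_cycle [Finite V] {G : SimpleGraph V} {u : V} (c : G.Walk u u)
    (hc : c.IsCycle) : ∃ B, IsBlock G B ∧ ∀ z ∈ c.support, z ∈ B.verts := by
  obtain ⟨B, hB, hle⟩ := aux_exists_block c.toSubgraph c.toSubgraph_connected
    (aux_cycle_nocut c hc)
  exact ⟨B, hB, fun z hz => hle.1 ((c.mem_verts_toSubgraph).mpr hz)⟩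

lemma aux_block_of_edge [Finite V] {G : SimpleGraph V} {a b : V} (h : G.Adj a b) :
    ∃ B, IsBlock G B ∧ B.Adj a b := by
  obtain ⟨B, hB, hle⟩ := aux_exists_block (G.subgraphOfAdj h) (Subgraph.subgraphOfAdj_connected h)
    (aux_single_edge_nocut h)
  exact ⟨B, hB, hle.2 (by simp)⟩

lemma aux_concat_path {G : SimpleGraph V} {a b c : V} {p : G.Walk a b} (hp : p.IsPath)
    (h : G.Adj b c) (hc : c ∉ p.support) : (p.concat h).IsPath := by
  apply Walk.IsPath.mk'
  rw [support_concat, List.nodup_append]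
  exact ⟨hp.support_nodup, List.nodup_singleton c,
    fun z hz w hw hzw => hc (by rw [List.mem_singleton.mp hw] at hzw; rwa [hzw] at hz)⟩

lemma aux_near_exists [Finite V] {G : SimpleGraph V} {B : G.Subgraph} (hB : IsBlock G B)
    (v : V) : ∃ x ∈ B.verts, ∀ w ∈ B.verts, G.dist v x ≤ G.dist v w :=
  Set.exists_min_image B.verts (G.dist v) (Set.toFinite _) hB.1.nonempty

lemma aux_level_le {G : SimpleGraph V} (hG : G.Connected) (hBG : IsBlockGraph G)
    {B : G.Subgraph} (hB : IsBlock G B) {v x w : V} (hx : x ∈ B.verts) (hw : w ∈ B.verts)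
    (hne : w ≠ x) : G.dist v w ≤ G.dist v x + 1 := by
  have hadj : G.Adj x w := hBG B hB hx hw (fun h => hne h.symm)
  have htri := hG.dist_triangle (u := v) (v := x) (w := w)
  have h1 : G.dist x w ≤ 1 := by simpa using dist_le (Walk.cons hadj Walk.nil)
  omega

lemma aux_cycle_contra [Finite V] {G : SimpleGraph V} (hG : G.Connected)
    (hBG : IsBlockGraph G) (v : V) {u : V} (c : G.Walk u u) (hc : c.IsCycle)
    (hlev : ∀ a b, s(a, b) ∈ c.edges →
      G.dist v a + 1 = G.dist v b ∨ G.dist v b + 1 = G.dist v a)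
    {D : ℕ} (hle : ∀ z ∈ c.support, G.dist v z ≤ D)
    (huniq : ∀ B : G.Subgraph, IsBlock G B → ∀ n₁ n₂, n₁ ∈ B.verts → n₂ ∈ B.verts →
      (∀ w ∈ B.verts, G.dist v n₁ ≤ G.dist v w) → (∀ w ∈ B.verts, G.dist v n₂ ≤ G.dist v w) →
      G.dist v n₁ < D → n₁ = n₂) : False := by
  obtain ⟨B₃, hB₃, hsup⟩ := aux_block_of_cycle c hc
  obtain ⟨z₃, hz₃, hz₃min⟩ := aux_near_exists hB₃ v
  have hB₃le : ∀ w ∈ B₃.verts, G.dist v w ≤ G.dist v z₃ + 1 := by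
    intro w hw
    by_cases hwz : w = z₃
    · rw [hwz]; omega
    · exact aux_level_le hG hBG hB₃ hz₃ hw hwz
  have claim : ∀ a b, s(a, b) ∈ c.edges → G.dist v a + 1 = G.dist v b → False := by
    intro a b he hab
    have hbc : b ∈ c.support := c.snd_mem_support_of_mem_edges he
    have haB := hsup a (c.fst_mem_support_of_mem_edges he)
    have hbB := hsup b hbc
    have h1 : G.dist v b ≤ G.dist v z₃ + 1 := hB₃le b hbB
    have h2 : G.dist v z₃ ≤ G.dist v a := hz₃min a haB
    have hμD : G.dist v z₃ < D := by have := hle b hbc; omega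
    obtain ⟨n₁, n₂, hnne, hn₁e, hn₂e⟩ := aux_two_edges c hc hbc
    have hkey : ∀ n, s(b, n) ∈ c.edges → G.dist v n = G.dist v z₃ := by
      intro n hn
      have hnB := hsup n (c.snd_mem_support_of_mem_edges hn)
      have hl := hlev b n hn
      have h3 := hB₃le n hnB
      have h4 := hz₃min n hnB
      omega
    have hn₁ := hkey n₁ hn₁e
    have hn₂ := hkey n₂ hn₂e
    apply hnne
    refine huniq B₃ hB₃ n₁ n₂ (hsup _ (c.snd_mem_support_of_mem_edges hn₁e))
      (hsup _ (c.snd_mem_support_of_mem_edges hn₂e)) ?_ ?_ ?_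
    · intro w hw; rw [hn₁]; exact hz₃min w hw
    · intro w hw; rw [hn₂]; exact hz₃min w hw
    · omega
  have hedge : c.edges ≠ [] := by
    intro h0
    have h3 := hc.three_le_length
    have hl := c.length_edges
    rw [h0] at hl
    simp at hl
    omega
  obtain ⟨e₀, he₀⟩ := List.exists_mem_of_ne_nil _ hedge
  induction e₀ using Sym2.ind with
  | _ a b =>
    rcases hlev a b he₀ with h | h
    · exact claim a b he₀ h
    · exact claim b a (by rwa [Sym2.eq_swap] at he₀) h

lemma aux_unique_nearest [Finite V] {G : SimpleGraph V} (hG : G.Connected)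
    (hBG : IsBlockGraph G) (v : V) :
    ∀ d : ℕ, ∀ B : G.Subgraph, IsBlock G B → ∀ x y, x ∈ B.verts → y ∈ B.verts →
      (∀ w ∈ B.verts, G.dist v x ≤ G.dist v w) → (∀ w ∈ B.verts, G.dist v y ≤ G.dist v w) →
      G.dist v x = d → x = y := by
  intro d
  induction d using Nat.strong_induction_on with
  | _ d IH =>
  intro B hB x y hx hy hminx hminy hdx
  by_contra hne
  have hdy : G.dist v y = d := le_antisymm (hdx ▸ hminy x hx) (hdx ▸ hminx y hy)
  rcases Nat.eq_zero_or_pos d with h0 | hdpos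
  · subst h0
    have hxv : x = v := ((hG.preconnected v x).dist_eq_zero_iff.mp hdx).symm
    have hyv : y = v := ((hG.preconnected v y).dist_eq_zero_iff.mp hdy).symm
    exact hne (hxv.trans hyv.symm)
  have hadjxy : G.Adj x y := hBG B hB hx hy hne
  obtain ⟨P, hPp, hPl⟩ := hG.exists_path_of_dist v x
  obtain ⟨Q, hQp, hQl⟩ := hG.exists_path_of_dist v y
  have hxQ : x ∉ Q.support := by
    intro hmem
    have hadd := aux_dist_add hG Q hQl hmem
    have hpos := (hG.preconnected x y).pos_dist_of_ne hne
    omega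
  have hRp : (Q.concat hadjxy.symm).IsPath := aux_concat_path hQp hadjxy.symm hxQ
  set R := Q.concat hadjxy.symm with hRdef
  have hRl : R.length = d + 1 := by rw [hRdef, length_concat]; omega
  have hPRne : P ≠ R := by
    intro h
    have hll := congrArg Walk.length h
    rw [hPl, hRl, hdx] at hll
    omega
  obtain ⟨u₀, c, hc, hce⟩ := aux_cycle_of_two_paths hPp hRp hPRne
  have hceR : ∀ e ∈ c.edges, e ∈ P.edges ∨ e ∈ Q.edges ∨ e = s(y, x) := by
    intro e he
    rcases hce e he with h | h
    · exact Or.inl h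
    · rw [hRdef, edges_concat, List.concat_eq_append, List.mem_append] at h
      rcases h with h | h
      · exact Or.inr (Or.inl h)
      · simp at h; exact Or.inr (Or.inr h)
  have hsupPQ : ∀ z ∈ c.support, z ∈ P.support ∨ z ∈ Q.support := by
    intro z hz
    obtain ⟨e, he, hze⟩ := aux_mem_edge_of_mem_support c hc.not_nil hz
    rcases hceR e he with h | h | h
    · exact Or.inl (aux_mem_support_of_edge P h hze)
    · exact Or.inr (aux_mem_support_of_edge Q h hze)
    · subst h
      rcases Sym2.mem_iff.mp hze with rfl | rfl
      · exact Or.inr Q.end_mem_support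
      · exact Or.inl P.end_mem_support
  have hlev_le : ∀ z ∈ c.support, G.dist v z ≤ d := by
    intro z hz
    rcases hsupPQ z hz with h | h
    · have := aux_dist_add hG P hPl h; omega
    · have := aux_dist_add hG Q hQl h; omega
  have hlev_eq : ∀ z ∈ c.support, G.dist v z = d → z = x ∨ z = y := by
    intro z hz hzd
    rcases hsupPQ z hz with h | h
    · left
      have hadd := aux_dist_add hG P hPl h
      have h0 : G.dist z x = 0 := by omega
      exact (hG.preconnected z x).dist_eq_zero_iff.mp h0
    · right
      have hadd := aux_dist_add hG Q hQl h
      have h0 : G.dist z y = 0 := by omega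
      exact (hG.preconnected z y).dist_eq_zero_iff.mp h0
  obtain ⟨B₃, hB₃, hsup₃⟩ := aux_block_of_cycle c hc
  by_cases hxyc : s(y, x) ∈ c.edges
  · have hxc : x ∈ c.support := c.snd_mem_support_of_mem_edges hxyc
    have hyc : y ∈ c.support := c.fst_mem_support_of_mem_edges hxyc
    have hBeq : B₃ = B := aux_block_eq hBG hB₃ hB hne (hsup₃ x hxc) (hsup₃ y hyc) hx hy
    have hxy_only : ∀ z ∈ c.support, z = x ∨ z = y := by
      intro z hz
      apply hlev_eq z hz
      have h1 := hlev_le z hz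
      have h2 : G.dist v x ≤ G.dist v z := hminx z (by rw [← hBeq]; exact hsup₃ z hz)
      omega
    classical
    have hnd : c.support.tail.Nodup := hc.support_nodup
    have hlen : c.support.tail.length = c.length := by
      have h1 := c.length_support
      have h2 : c.support.tail.length = c.support.length - 1 := List.length_tail
      omega
    have hcard := List.toFinset_card_of_nodup hnd
    have hsub2 : c.support.tail.toFinset ⊆ {x, y} := by
      intro z hz
      rw [List.mem_toFinset] at hz
      rcases hxy_only z (List.mem_of_mem_tail hz) with rfl | rfl <;> simp
    have h2 := Finset.card_le_card hsub2
    have h3 : ({x, y} : Finset V).card ≤ 2 := (Finset.card_insert_le _ _).trans (by simp)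
    have h4 := hc.three_le_length
    omega
  · have hPQ : ∀ e ∈ c.edges, e ∈ P.edges ∨ e ∈ Q.edges := by
      intro e he
      rcases hceR e he with h | h | h
      · exact Or.inl h
      · exact Or.inr h
      · exact absurd (h ▸ he) hxyc
    have hlev : ∀ a b, s(a, b) ∈ c.edges →
        G.dist v a + 1 = G.dist v b ∨ G.dist v b + 1 = G.dist v a := by
      intro a b he
      rcases hPQ _ he with h | h
      · exact aux_edge_level hG P hPl h
      · exact aux_edge_level hG Q hQl h
    exact aux_cycle_contra hG hBG v c hc hlev (D := d) hlev_le
      (fun B' hB' n₁ n₂ hn₁ hn₂ hm₁ hm₂ hlt =>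
        IH (G.dist v n₁) hlt B' hB' n₁ n₂ hn₁ hn₂ hm₁ hm₂ rfl)

lemma aux_unique_path [Finite V] {G : SimpleGraph V} (hG : G.Connected)
    (hBG : IsBlockGraph G) (v z : V) {P Q : G.Walk v z} (hPp : P.IsPath) (hQp : Q.IsPath)
    (hPl : P.length = G.dist v z) (hQl : Q.length = G.dist v z) : P = Q := by
  by_contra hne
  obtain ⟨u₀, c, hc, hce⟩ := aux_cycle_of_two_paths hPp hQp hne
  have hlev : ∀ a b, s(a, b) ∈ c.edges →
      G.dist v a + 1 = G.dist v b ∨ G.dist v b + 1 = G.dist v a := by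
    intro a b he
    rcases hce _ he with h | h
    · exact aux_edge_level hG P hPl h
    · exact aux_edge_level hG Q hQl h
  have hlev_le : ∀ z' ∈ c.support, G.dist v z' ≤ G.dist v z := by
    intro z' hz'
    obtain ⟨e, he, hze⟩ := aux_mem_edge_of_mem_support c hc.not_nil hz'
    rcases hce e he with h | h
    · have := aux_dist_add hG P hPl (aux_mem_support_of_edge P h hze); omega
    · have := aux_dist_add hG Q hQl (aux_mem_support_of_edge Q h hze); omega
  exact aux_cycle_contra hG hBG v c hc hlev (D := G.dist v z + 1)
    (fun z' hz' => by have := hlev_le z' hz'; omega)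
    (fun B' hB' n₁ n₂ hn₁ hn₂ hm₁ hm₂ _ =>
      aux_unique_nearest hG hBG v (G.dist v n₁) B' hB' n₁ n₂ hn₁ hn₂ hm₁ hm₂ rfl)

lemma aux_level_succ [Finite V] {G : SimpleGraph V} (hG : G.Connected)
    (hBG : IsBlockGraph G) (v : V) {B : G.Subgraph} (hB : IsBlock G B) {x w : V}
    (hx : x ∈ B.verts) (hminx : ∀ w' ∈ B.verts, G.dist v x ≤ G.dist v w')
    (hw : w ∈ B.verts) (hne : w ≠ x) : G.dist v w = G.dist v x + 1 := by
  have h1 := hminx w hw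
  have h2 := aux_level_le hG hBG hB hx hw hne (v := v)
  have h3 : G.dist v w ≠ G.dist v x := by
    intro heq
    exact hne (aux_unique_nearest hG hBG v (G.dist v w) B hB w x hw hx
      (fun w' hw' => heq ▸ hminx w' hw') hminx rfl)
  omega

end AuxProof

/-- For a connected block graph `G` and `v ∈ V(G)`, the graph
`T(v,G)` is a spanning tree of `G`. -/
theorem steiner_stmt_2 [Fintype V] (G : SimpleGraph V) (hG : G.Connected)
    (hBG : IsBlockGraph G) (v : V) (T : SimpleGraph V) (hT : IsTvG G T v) :
    T.IsTree := by
  classical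
  have hTG : ∀ a b, T.Adj a b → G.Adj a b := fun a b h => ((hT a b).mp h).1
  have hT1 : ∀ a b, T.Adj a b →
      G.dist v a + 1 = G.dist v b ∨ G.dist v b + 1 = G.dist v a := by
    intro a b h
    obtain ⟨hab, hblocks⟩ := (hT a b).mp h
    obtain ⟨B, hB, hBadj⟩ := aux_block_of_edge hab
    have haB : a ∈ B.verts := B.edge_vert hBadj
    have hbB : b ∈ B.verts := B.edge_vert hBadj.symm
    rcases hblocks B hB hBadj with hnear | hnear
    · exact Or.inl (aux_level_succ hG hBG v hB hnear.1 hnear.2 hbB hab.ne').symm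
    · exact Or.inr (aux_level_succ hG hBG v hB hnear.1 hnear.2 haB hab.ne).symm
  have hT2 : ∀ w, w ≠ v → ∃ u, T.Adj w u ∧ G.dist v u + 1 = G.dist v w := by
    intro w hw
    obtain ⟨P, hPp, hPl⟩ := hG.exists_path_of_dist v w
    have hnil : ¬ P.reverse.Nil := by
      rw [Walk.nil_iff_length_eq, Walk.length_reverse, hPl]
      exact fun h0 => hw (((hG.preconnected v w).dist_eq_zero_iff.mp h0).symm)
    obtain ⟨u, hadj, r, hr⟩ := Walk.not_nil_iff.mp hnil
    have huP : u ∈ P.support := by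
      have h1 : u ∈ P.reverse.support := by rw [hr]; simp
      rwa [Walk.support_reverse, List.mem_reverse] at h1
    have hadd := aux_dist_add hG P hPl huP
    have h1 : G.dist u w ≤ 1 := by simpa using dist_le (Walk.cons hadj.symm Walk.nil)
    have h2 : 0 < G.dist u w := (hG.preconnected u w).pos_dist_of_ne hadj.ne'
    have hu : G.dist v u + 1 = G.dist v w := by omega
    refine ⟨u, ?_, hu⟩
    rw [hT w u]
    refine ⟨hadj, ?_⟩
    intro B hB hBadj
    right
    have huB : u ∈ B.verts := B.edge_vert hBadj.symm
    have hwB : w ∈ B.verts := B.edge_vert hBadj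
    obtain ⟨z₀, hz₀, hz₀min⟩ := aux_near_exists hB v
    have hle1 : G.dist v w ≤ G.dist v z₀ + 1 := by
      by_cases hwz : w = z₀
      · rw [hwz]; omega
      · exact aux_level_le hG hBG hB hz₀ hwB hwz
    have huz : G.dist v u = G.dist v z₀ := by
      have := hz₀min u huB; omega
    exact ⟨huB, fun w' hw' => by rw [huz]; exact hz₀min w' hw'⟩
  have hT3 : ∀ z w₁ w₂, T.Adj z w₁ → T.Adj z w₂ →
      G.dist v w₁ + 1 = G.dist v z → G.dist v w₂ + 1 = G.dist v z → w₁ = w₂ := by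
    intro z w₁ w₂ ha1 ha2 hl1 hl2
    obtain ⟨P₁, hP₁p, hP₁l⟩ := hG.exists_path_of_dist v w₁
    obtain ⟨P₂, hP₂p, hP₂l⟩ := hG.exists_path_of_dist v w₂
    have hg1 : G.Adj w₁ z := (hTG _ _ ha1).symm
    have hg2 : G.Adj w₂ z := (hTG _ _ ha2).symm
    have hz1 : z ∉ P₁.support := by
      intro hmem
      have := aux_dist_add hG P₁ hP₁l hmem
      omega
    have hz2 : z ∉ P₂.support := by
      intro hmem
      have := aux_dist_add hG P₂ hP₂l hmem
      omega
    have hW1p : (P₁.concat hg1).IsPath := aux_concat_path hP₁p hg1 hz1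
    have hW2p : (P₂.concat hg2).IsPath := aux_concat_path hP₂p hg2 hz2
    have hW1l : (P₁.concat hg1).length = G.dist v z := by rw [Walk.length_concat]; omega
    have hW2l : (P₂.concat hg2).length = G.dist v z := by rw [Walk.length_concat]; omega
    have heq : P₁.concat hg1 = P₂.concat hg2 :=
      aux_unique_path hG hBG v z hW1p hW2p hW1l hW2l
    have hsupeq := congrArg (fun (p : G.Walk v z) => p.reverse.support) heq
    simp only [Walk.reverse_concat, Walk.support_cons] at hsupeq
    have h3 : P₁.reverse.support = P₂.reverse.support := by
      have := congrArg List.tail hsupeq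
      simpa using this
    have e1 := P₁.reverse.support_eq_cons
    have e2 := P₂.reverse.support_eq_cons
    rw [e1, e2] at h3
    exact (List.cons_eq_cons.mp h3).1
  haveI : Nonempty V := hG.nonempty
  have hreach : ∀ n, ∀ w, G.dist v w = n → T.Reachable w v := by
    intro n
    induction n using Nat.strong_induction_on with
    | _ n IHn =>
    intro w hw
    by_cases hwv : w = v
    · rw [hwv]
    · obtain ⟨u, hTadj, hu⟩ := hT2 w hwv
      exact (hTadj.reachable).trans (IHn (G.dist v u) (by omega) u rfl)
  constructor
  · rw [connected_iff]
    exact ⟨fun a b => (hreach _ a rfl).trans (hreach _ b rfl).symm, ‹Nonempty V›⟩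
  · intro u₀ c hc
    have hTedges : ∀ a b, s(a, b) ∈ c.edges → T.Adj a b := fun a b h => c.adj_of_mem_edges h
    obtain ⟨z, hzc, hzmax⟩ := Set.exists_max_image {w | w ∈ c.support} (G.dist v)
      (List.finite_toSet _) ⟨u₀, c.start_mem_support⟩
    obtain ⟨w₁, w₂, hne, he₁, he₂⟩ := aux_two_edges c hc hzc
    have hw₁c : w₁ ∈ c.support := c.snd_mem_support_of_mem_edges he₁
    have hw₂c : w₂ ∈ c.support := c.snd_mem_support_of_mem_edges he₂
    have hl₁ : G.dist v w₁ + 1 = G.dist v z := by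
      rcases hT1 z w₁ (hTedges _ _ he₁) with h | h
      · have := hzmax w₁ hw₁c; omega
      · exact h
    have hl₂ : G.dist v w₂ + 1 = G.dist v z := by
      rcases hT1 z w₂ (hTedges _ _ he₂) with h | h
      · have := hzmax w₂ hw₂c; omega
      · exact h
    exact hne (hT3 z w₁ w₂ (hTedges _ _ he₁) (hTedges _ _ he₂) hl₁ hl₂)
end

section
/- Let G be a connected block graph, v ∈ V(G), and k an integer with 2 ≤ k ≤ n(G). Let T(v,G) be the spanning tree of G obtained by deleting, from every block B of G, each edge of B not incident with Near_G(v,B). Then ecc_k(v,G) = ecc_k(v,T(v,G)). -/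
open SimpleGraph

variable {V : Type*}

namespace SB5
open Relation (ReflTransGen)

variable {G : SimpleGraph V}

lemma rtgm {α : Type*} {r p : α → α → Prop} {a b : α} (hr : ReflTransGen r a b)
    (h : ∀ a b, r a b → p a b) : ReflTransGen p a b :=
  Relation.ReflTransGen.mono h _ _ hr

lemma rtg_up_gen {α β : Type*} {R : β → β → Prop} {R' : α → α → Prop} {f : α → β}
    (hinj : Function.Injective f)
    (hlift : ∀ (x : α) (q : β), R (f x) q → ∃ y, f y = q ∧ R' x y)
    {a b : α} (h : ReflTransGen R (f a) (f b)) : ReflTransGen R' a b := by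
  suffices H : ∀ c, ReflTransGen R (f a) c → ∃ y, f y = c ∧ ReflTransGen R' a y by
    obtain ⟨y, hy, hr⟩ := H (f b) h
    rwa [hinj hy] at hr
  intro c hc
  induction hc with
  | refl => exact ⟨a, rfl, .refl⟩
  | tail _ step ih =>
    obtain ⟨y, rfl, ry⟩ := ih
    obtain ⟨z, hz, step'⟩ := hlift y _ step
    exact ⟨z, hz, ry.tail step'⟩

lemma preconn_iff_rtg {W : Type*} (H : SimpleGraph W) :
    H.Preconnected ↔ ∀ a b : W, ReflTransGen H.Adj a b := by
  constructor
  · intro h a b; exact (reachable_iff_reflTransGen a b).mp (h a b)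
  · intro h a b; exact (reachable_iff_reflTransGen a b).mpr (h a b)

variable {G : SimpleGraph V}

lemma preconn_coe_iff (B : G.Subgraph) :
    B.coe.Preconnected ↔ ∀ a ∈ B.verts, ∀ b ∈ B.verts, ReflTransGen B.Adj a b := by
  rw [preconn_iff_rtg]
  constructor
  · intro h a ha b hb
    exact (h ⟨a, ha⟩ ⟨b, hb⟩).lift Subtype.val (fun x y hxy => hxy)
  · rintro h ⟨a, ha⟩ ⟨b, hb⟩
    exact rtg_up_gen Subtype.val_injective
      (fun x q hq => ⟨⟨q, hq.snd_mem⟩, rfl, hq⟩) (h a ha b hb)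

lemma connected_iff_rtg (B : G.Subgraph) :
    B.Connected ↔ B.verts.Nonempty ∧ ∀ a ∈ B.verts, ∀ b ∈ B.verts, ReflTransGen B.Adj a b := by
  rw [Subgraph.connected_iff, Subgraph.preconnected_iff, preconn_coe_iff, and_comm]

lemma notCut_iff (B : G.Subgraph) {x : V} (hx : x ∈ B.verts) :
    ¬ IsCutVertex B.coe ⟨x, hx⟩ ↔
      ∀ a, a ∈ B.verts → a ≠ x → ∀ b, b ∈ B.verts → b ≠ x →
        ReflTransGen (fun p q => B.Adj p q ∧ p ≠ x ∧ q ≠ x) a b := by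
  unfold IsCutVertex
  rw [not_not, preconn_iff_rtg]
  constructor
  · intro h a ha hax b hb hbx
    have h2 := h ⟨⟨a, ha⟩, fun hh => hax (congrArg Subtype.val hh)⟩
      ⟨⟨b, hb⟩, fun hh => hbx (congrArg Subtype.val hh)⟩
    refine h2.lift (fun y => (y.1 : V)) ?_
    rintro y z hyz
    simp only [comap_adj, Function.Embedding.coe_subtype, Subgraph.coe_adj] at hyz
    refine ⟨hyz, fun hy => y.2 (Subtype.ext hy), fun hz => z.2 (Subtype.ext hz)⟩
  · rintro h ⟨⟨a, ha⟩, hax⟩ ⟨⟨b, hb⟩, hbx⟩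
    have hax' : a ≠ x := fun hh => hax (Subtype.ext hh)
    have hbx' : b ≠ x := fun hh => hbx (Subtype.ext hh)
    refine rtg_up_gen (f := fun y => (y.1 : V)) ?_ ?_ (h a ha hax' b hb hbx')
    · intro y z hyz
      exact Subtype.ext (Subtype.ext hyz)
    · rintro y q ⟨hadj, hy, hq⟩
      refine ⟨⟨⟨q, hadj.snd_mem⟩, fun hh => hq (congrArg Subtype.val hh)⟩, rfl, ?_⟩
      simpa only [comap_adj, Function.Embedding.coe_subtype, Subgraph.coe_adj] using hadj

lemma rtg_symm {R : V → V → Prop} (hs : Symmetric R) {a b : V}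
    (h : ReflTransGen R a b) : ReflTransGen R b a :=
  by
  induction h with
  | refl => exact .refl
  | tail _ st ih => exact ReflTransGen.head (hs st) ih

lemma avoid {B : G.Subgraph} (hc : B.Connected)
    (hnc : ∀ x : B.verts, ¬ IsCutVertex B.coe x) (x : V) {a b : V}
    (ha : a ∈ B.verts) (hax : a ≠ x) (hb : b ∈ B.verts) (hbx : b ≠ x) :
    ReflTransGen (fun p q => B.Adj p q ∧ p ≠ x ∧ q ≠ x) a b := by
  by_cases hx : x ∈ B.verts
  · exact (notCut_iff B hx).mp (hnc ⟨x, hx⟩) a ha hax b hb hbx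
  · refine rtgm (((connected_iff_rtg B).mp hc).2 a ha b hb) ?_
    intro p q hpq
    exact ⟨hpq, fun h => hx (h ▸ hpq.fst_mem), fun h => hx (h ▸ hpq.snd_mem)⟩

/-- Any block of a block graph is an induced clique: any two of its vertices are
adjacent *in the block*. -/
lemma block_adj (hBG : IsBlockGraph G) {B : G.Subgraph} (hB : IsBlock G B)
    {a b : V} (ha : a ∈ B.verts) (hb : b ∈ B.verts) (hab : a ≠ b) : B.Adj a b := by
  have hGadj : G.Adj a b := (hBG B hB) ha hb hab
  set B' : G.Subgraph := B ⊔ G.subgraphOfAdj hGadj with hB'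
  have hverts : B'.verts = B.verts := by
    simp only [hB', Subgraph.verts_sup, subgraphOfAdj_verts]
    rw [Set.union_eq_self_of_subset_right]
    intro z hz
    rcases hz with rfl | hz
    · exact ha
    · exact Set.mem_singleton_iff.mp hz ▸ hb
  have hle : B ≤ B' := le_sup_left
  have hconn : B'.Connected := by
    rw [connected_iff_rtg]
    rw [hverts]
    refine ⟨⟨a, ha⟩, fun p hp q hq => ?_⟩
    exact rtgm (((connected_iff_rtg B).mp hB.1).2 p hp q hq)
      (fun p q h => Subgraph.sup_adj.mpr (Or.inl h))
  have hnc : ∀ x : B'.verts, ¬ IsCutVertex B'.coe x := by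
    rintro ⟨x, hx⟩
    have hx' : x ∈ B.verts := hverts ▸ hx
    rw [notCut_iff B' hx]
    intro p hp hpx q hq hqx
    rw [hverts] at hp hq
    exact rtgm (avoid hB.1 hB.2.1 x hp hpx hq hqx)
      (fun p q h => ⟨Subgraph.sup_adj.mpr (Or.inl h.1), h.2.1, h.2.2⟩)
  have := hB.2.2 B' hle hconn hnc
  have hadj : B'.Adj a b := Subgraph.sup_adj.mpr (Or.inr (by simp))
  rwa [this] at hadj

/-- Two blocks sharing two distinct vertices are equal. -/
lemma block_eq_of_two {B₁ B₂ : G.Subgraph} (h₁ : IsBlock G B₁) (h₂ : IsBlock G B₂)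
    {p q : V} (hpq : p ≠ q) (hp₁ : p ∈ B₁.verts) (hq₁ : q ∈ B₁.verts)
    (hp₂ : p ∈ B₂.verts) (hq₂ : q ∈ B₂.verts) : B₁ = B₂ := by
  set B' : G.Subgraph := B₁ ⊔ B₂ with hB'
  have hv : B'.verts = B₁.verts ∪ B₂.verts := Subgraph.verts_sup B₁ B₂
  have route : ∀ a ∈ B'.verts, ReflTransGen B'.Adj a p := by
    intro a ha
    rw [hv] at ha
    rcases ha with ha | ha
    · exact rtgm (((connected_iff_rtg B₁).mp h₁.1).2 a ha p hp₁)
        (fun _ _ h => Subgraph.sup_adj.mpr (Or.inl h))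
    · exact rtgm (((connected_iff_rtg B₂).mp h₂.1).2 a ha p hp₂)
        (fun _ _ h => Subgraph.sup_adj.mpr (Or.inr h))
  have hconn : B'.Connected := by
    rw [connected_iff_rtg]
    refine ⟨⟨p, hv ▸ Or.inl hp₁⟩, fun a ha b hb => ?_⟩
    refine (route a ha).trans (rtg_symm ?_ (route b hb))
    intro u w h; exact h.symm
  have hnc : ∀ x : B'.verts, ¬ IsCutVertex B'.coe x := by
    rintro ⟨x, hx⟩
    rw [notCut_iff B' hx]
    intro a ha hax b hb hbx
    obtain ⟨s, hsx, hs₁, hs₂⟩ : ∃ s, s ≠ x ∧ s ∈ B₁.verts ∧ s ∈ B₂.verts := by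
      by_cases h : x = p
      · exact ⟨q, by rw [h]; exact hpq.symm, hq₁, hq₂⟩
      · exact ⟨p, fun hh => h hh.symm, hp₁, hp₂⟩
    have routeA : ∀ a ∈ B'.verts, a ≠ x →
        ReflTransGen (fun u w => B'.Adj u w ∧ u ≠ x ∧ w ≠ x) a s := by
      intro a ha hax
      rw [hv] at ha
      rcases ha with ha | ha
      · exact rtgm (avoid h₁.1 h₁.2.1 x ha hax hs₁ hsx)
          (fun _ _ h => ⟨Subgraph.sup_adj.mpr (Or.inl h.1), h.2⟩)
      · exact rtgm (avoid h₂.1 h₂.2.1 x ha hax hs₂ hsx)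
          (fun _ _ h => ⟨Subgraph.sup_adj.mpr (Or.inr h.1), h.2⟩)
    refine (routeA a ha hax).trans (rtg_symm ?_ (routeA b hb hbx))
    intro u w h; exact ⟨h.1.symm, h.2.2, h.2.1⟩
  have e₁ : B' = B₁ := h₁.2.2 B' le_sup_left hconn hnc
  have e₂ : B' = B₂ := h₂.2.2 B' le_sup_right hconn hnc
  rw [← e₁, e₂]

/-- plain walk-to-RTG along the walk's edges -/
lemma walk_rtg0 {c d : V} (P : G.Walk c d) :
    ReflTransGen (fun p q => s(p, q) ∈ P.edges) c d := by
  induction P with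
  | nil => exact .refl
  | cons h P' ih =>
    refine ReflTransGen.head (by simp) (rtgm ih ?_)
    intro p q hpq
    rw [Walk.edges_cons]
    exact List.mem_cons_of_mem _ hpq

lemma walk_rtg0_from {c d w : V} (P : G.Walk c d) (hw : w ∈ P.support) :
    ReflTransGen (fun p q => s(p, q) ∈ P.edges) w d := by
  classical
  exact rtgm (walk_rtg0 (P.dropUntil w hw)) (fun _ _ h => P.edges_dropUntil_subset hw h)

lemma walk_rtg {c d x : V} (P : G.Walk c d) (hx : x ∉ P.support) :
    ReflTransGen (fun p q => s(p, q) ∈ P.edges ∧ p ≠ x ∧ q ≠ x) c d := by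
  induction P with
  | nil => exact .refl
  | cons h P' ih =>
    rename_i u u' _
    rw [Walk.support_cons] at hx
    have hux : u ≠ x := fun hh => hx (by rw [hh]; exact List.mem_cons_self)
    have hx' : x ∉ P'.support := fun hh => hx (List.mem_cons_of_mem _ hh)
    have hu'x : u' ≠ x := fun hh => hx' (by rw [← hh]; exact P'.start_mem_support)
    refine ReflTransGen.head ⟨by simp, hux, hu'x⟩ (rtgm (ih hx') ?_)
    intro p q hpq
    exact ⟨by rw [Walk.edges_cons]; exact List.mem_cons_of_mem _ hpq.1, hpq.2⟩

lemma walk_rtg_from {c d x w : V} (P : G.Walk c d) (hx : x ∉ P.support)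
    (hw : w ∈ P.support) :
    ReflTransGen (fun p q => s(p, q) ∈ P.edges ∧ p ≠ x ∧ q ≠ x) w d := by
  classical
  have hx' : x ∉ (P.dropUntil w hw).support :=
    fun hh => hx (P.support_dropUntil_subset hw hh)
  exact rtgm (walk_rtg (P.dropUntil w hw) hx')
    (fun _ _ h => ⟨P.edges_dropUntil_subset hw h.1, h.2⟩)

lemma path_rtg_end {d x w : V} (P : G.Walk x d) (hP : P.IsPath)
    (hw : w ∈ P.support) (hwx : w ≠ x) :
    ReflTransGen (fun p q => s(p, q) ∈ P.edges ∧ p ≠ x ∧ q ≠ x) w d := by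
  cases P with
  | nil =>
    simp only [Walk.support_nil, List.mem_singleton] at hw
    exact absurd hw hwx
  | cons h P' =>
    rename_i u'
    have hnodup := (Walk.isPath_def _).mp hP
    rw [Walk.support_cons] at hnodup
    have hxP' : x ∉ P'.support := (List.nodup_cons.mp hnodup).1
    rw [Walk.support_cons] at hw
    rcases List.mem_cons.mp hw with rfl | hw'
    · exact absurd rfl hwx
    · exact rtgm (walk_rtg_from P' hxP' hw')
        (fun _ _ h => ⟨by rw [Walk.edges_cons]; exact List.mem_cons_of_mem _ h.1, h.2⟩)

lemma path_rtg {u a x w : V} (P : G.Walk u a) (hP : P.IsPath)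
    (hw : w ∈ P.support) (hwx : w ≠ x) :
    ReflTransGen (fun p q => s(p, q) ∈ P.edges ∧ p ≠ x ∧ q ≠ x) w u ∨
      ReflTransGen (fun p q => s(p, q) ∈ P.edges ∧ p ≠ x ∧ q ≠ x) w a := by
  induction P with
  | nil =>
    simp only [Walk.support_nil, List.mem_singleton] at hw
    exact Or.inl (hw ▸ .refl)
  | cons h P' ih =>
    rename_i c c' _
    have hmono : ∀ p q, (s(p, q) ∈ P'.edges ∧ p ≠ x ∧ q ≠ x) →
        (s(p, q) ∈ (Walk.cons h P').edges ∧ p ≠ x ∧ q ≠ x) :=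
      fun p q hpq => ⟨by rw [Walk.edges_cons]; exact List.mem_cons_of_mem _ hpq.1, hpq.2⟩
    rw [Walk.support_cons] at hw
    rcases List.mem_cons.mp hw with rfl | hw'
    · exact Or.inl .refl
    · by_cases hc : c = x
      · subst hc
        have hnodup := (Walk.isPath_def _).mp hP
        rw [Walk.support_cons] at hnodup
        have hcP' : c ∉ P'.support := (List.nodup_cons.mp hnodup).1
        exact Or.inr (rtgm (walk_rtg_from P' hcP' hw') hmono)
      · by_cases hc' : c' = x
        · subst hc'
          exact Or.inr (rtgm (path_rtg_end P' hP.of_cons hw' hwx) hmono)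
        · rcases ih hP.of_cons hw' with h1 | h1
          · refine Or.inl ((rtgm h1 hmono).tail ?_)
            refine ⟨?_, hc', hc⟩
            rw [Sym2.eq_swap, Walk.edges_cons]
            exact List.mem_cons_self
          · exact Or.inr (rtgm h1 hmono)

lemma rtg_ne_end {R : V → V → Prop} {x w e : V}
    (h : ReflTransGen (fun p q => R p q ∧ p ≠ x ∧ q ≠ x) w e) (hwx : w ≠ x) : e ≠ x := by
  cases h.cases_tail with
  | inl h' => exact h' ▸ hwx
  | inr h' => obtain ⟨_, _, hstep⟩ := h'; exact hstep.2.2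

/-- Convexity: every path between two vertices of a block stays in the block. -/
lemma block_convex (hBG : IsBlockGraph G) {B : G.Subgraph} (hB : IsBlock G B)
    {u a : V} (hu : u ∈ B.verts) (ha : a ∈ B.verts)
    (P : G.Walk u a) (hP : P.IsPath) : ∀ w ∈ P.support, w ∈ B.verts := by
  by_cases hua : u = a
  · subst hua
    rw [Walk.isPath_iff_eq_nil.mp hP]
    intro w hw
    simp only [Walk.support_nil, List.mem_singleton] at hw
    exact hw ▸ hu
  · -- the cycle subgraph: the path plus the edge u-a
    have hGua : G.Adj u a := (hBG B hB) hu ha hua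
    set C : G.Subgraph :=
      { verts := {z | z ∈ P.support}
        Adj := fun p q => s(p, q) ∈ P.edges ∨ (p = u ∧ q = a) ∨ (p = a ∧ q = u)
        adj_sub := by
          rintro p q (h | ⟨rfl, rfl⟩ | ⟨rfl, rfl⟩)
          · exact P.adj_of_mem_edges h
          · exact hGua
          · exact hGua.symm
        edge_vert := by
          rintro p q (h | ⟨rfl, rfl⟩ | ⟨rfl, rfl⟩)
          · exact P.fst_mem_support_of_mem_edges h
          · exact P.start_mem_support
          · exact P.end_mem_support
        symm := ⟨by
          rintro p q (h | ⟨rfl, rfl⟩ | ⟨rfl, rfl⟩)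
          · exact Or.inl (Sym2.eq_swap ▸ h)
          · exact Or.inr (Or.inr ⟨rfl, rfl⟩)
          · exact Or.inr (Or.inl ⟨rfl, rfl⟩)⟩ } with hC
    set B' : G.Subgraph := B ⊔ C with hB'
    have hCsymm : Symmetric B'.Adj := fun p q h => h.symm
    have hvB' : B'.verts = B.verts ∪ {z | z ∈ P.support} := rfl
    -- route any vertex of B' to some vertex of B, avoiding x
    have route2 : ∀ x w, w ∈ B'.verts → w ≠ x → ∃ e, e ∈ B.verts ∧ e ≠ x ∧
        ReflTransGen (fun p q => B'.Adj p q ∧ p ≠ x ∧ q ≠ x) w e := by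
      intro x w hw hwx
      rcases hw with hw | hw
      · exact ⟨w, hw, hwx, .refl⟩
      · have hmono : ∀ p q, (s(p, q) ∈ P.edges ∧ p ≠ x ∧ q ≠ x) →
            (B'.Adj p q ∧ p ≠ x ∧ q ≠ x) :=
          fun p q h => ⟨Subgraph.sup_adj.mpr (Or.inr (Or.inl h.1)), h.2⟩
        rcases path_rtg P hP hw hwx with h1 | h1
        · exact ⟨u, hu, rtg_ne_end h1 hwx, rtgm h1 hmono⟩
        · exact ⟨a, ha, rtg_ne_end h1 hwx, rtgm h1 hmono⟩
    have hconn : B'.Connected := by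
      rw [connected_iff_rtg]
      refine ⟨⟨u, Or.inl hu⟩, fun p hp q hq => ?_⟩
      have routep : ∀ p, p ∈ B'.verts → ReflTransGen B'.Adj p u := by
        intro p hp
        rcases hp with hp | hp
        · exact rtgm (((connected_iff_rtg B).mp hB.1).2 p hp u hu)
            (fun _ _ h => Subgraph.sup_adj.mpr (Or.inl h))
        · refine (rtgm (walk_rtg0_from P hp)
            (fun _ _ h => Subgraph.sup_adj.mpr (Or.inr (Or.inl h)))).tail ?_
          exact Subgraph.sup_adj.mpr (Or.inr (Or.inr (Or.inr ⟨rfl, rfl⟩)))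
      exact (routep p hp).trans (rtg_symm hCsymm (routep q hq))
    have hnc : ∀ x : B'.verts, ¬ IsCutVertex B'.coe x := by
      rintro ⟨x, hx⟩
      rw [notCut_iff B' hx]
      intro p hp hpx q hq hqx
      obtain ⟨e₁, he₁, he₁x, hr₁⟩ := route2 x p hp hpx
      obtain ⟨e₂, he₂, he₂x, hr₂⟩ := route2 x q hq hqx
      have hmid : ReflTransGen (fun p q => B'.Adj p q ∧ p ≠ x ∧ q ≠ x) e₁ e₂ :=
        rtgm (avoid hB.1 hB.2.1 x he₁ he₁x he₂ he₂x)
          (fun _ _ h => ⟨Subgraph.sup_adj.mpr (Or.inl h.1), h.2⟩)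
      refine (hr₁.trans hmid).trans (rtg_symm ?_ hr₂)
      intro p q h
      exact ⟨h.1.symm, h.2.2, h.2.1⟩
    have heq : B' = B := hB.2.2 B' le_sup_left hconn hnc
    intro w hw
    have : w ∈ B'.verts := Or.inr hw
    rwa [heq] at this
/-- first vertex of a walk lying in `B` -/
lemma first_in (B : G.Subgraph) {v a : V} (P : G.Walk v a) (ha : a ∈ B.verts) :
    ∃ u, u ∈ B.verts ∧ ∃ Q : G.Walk v u, ∃ rest : G.Walk u a,
      P = Q.append rest ∧ Q.support ⊆ P.support ∧ Q.edges ⊆ P.edges ∧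
      ∀ w ∈ Q.support, w ∈ B.verts → w = u := by
  induction P with
  | nil =>
    rename_i c
    exact ⟨c, ha, Walk.nil, Walk.nil, rfl, fun _ h => h, fun _ h => h,
      fun w hw _ => by simpa using hw⟩
  | cons h P' ih =>
    rename_i c c' _
    by_cases hc : c ∈ B.verts
    · refine ⟨c, hc, Walk.nil, Walk.cons h P', rfl, ?_, ?_, ?_⟩
      · intro w hw
        simp only [Walk.support_nil, List.mem_singleton] at hw
        exact hw ▸ (Walk.cons h P').start_mem_support
      · intro e he; simp at he
      · intro w hw _
        simp only [Walk.support_nil, List.mem_singleton] at hw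
        exact hw
    · obtain ⟨u, hu, Q', rest, heq, hsupp, hedges, honly⟩ := ih ha
      refine ⟨u, hu, Walk.cons h Q', rest, by rw [heq, Walk.cons_append], ?_, ?_, ?_⟩
      · intro w hw
        rw [Walk.support_cons] at hw ⊢
        rcases List.mem_cons.mp hw with rfl | hw'
        · exact List.mem_cons_self
        · exact List.mem_cons_of_mem _ (hsupp hw')
      · intro e he
        rw [Walk.edges_cons] at he ⊢
        rcases List.mem_cons.mp he with rfl | he'
        · exact List.mem_cons_self
        · exact List.mem_cons_of_mem _ (hedges he')
      · intro w hw hwB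
        rw [Walk.support_cons] at hw
        rcases List.mem_cons.mp hw with rfl | hw'
        · exact absurd hwB hc
        · exact honly w hw' hwB

/-- The gate of a block: the nearest vertex, lying on every walk from `v` into the block. -/
lemma gate [Fintype V] (hG : G.Connected) (hBG : IsBlockGraph G)
    {B : G.Subgraph} (hB : IsBlock G B) (v : V) :
    ∃ g, g ∈ B.verts ∧ (∀ w ∈ B.verts, G.dist v g ≤ G.dist v w) ∧
      ∀ a, a ∈ B.verts → ∀ P : G.Walk v a, g ∈ P.support := by
  classical
  have hne : B.verts.Nonempty := ((connected_iff_rtg B).mp hB.1).1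
  obtain ⟨g, hgB, hgmin⟩ := Set.exists_min_image B.verts (fun w => G.dist v w)
    (Set.toFinite _) hne
  -- a geodesic from v to g meets B only at its endpoint
  obtain ⟨R, hR⟩ := (hG v g).exists_walk_length_eq_dist
  obtain ⟨u', hu', QR, restR, heqR, hsuppR, _, honlyR⟩ := first_in B R hgB
  have hu'g : u' = g := by
    by_contra hne'
    have hrest1 : 1 ≤ restR.length := by
      rcases Nat.eq_zero_or_pos restR.length with h0 | h1
      · exact absurd (Walk.eq_of_length_eq_zero h0) hne'
      · exact h1
    have hQd : G.dist v u' ≤ QR.length := SimpleGraph.dist_le QR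
    have hmin' : G.dist v g ≤ G.dist v u' := hgmin u' hu'
    have hlen : R.length = QR.length + restR.length := by
      rw [heqR, Walk.length_append]
    omega
  have hgu : g = u' := hu'g.symm
  subst hgu
  -- QR : walk from v to g meeting B only at g
  refine ⟨g, hgB, hgmin, ?_⟩
  intro a haB P
  obtain ⟨u, hu, Q, rest, heqP, hsuppP, _, honlyP⟩ := first_in B P haB
  suffices hux : u = g by
    subst hux
    exact hsuppP Q.end_mem_support
  by_contra hux
  set W : G.Walk g u := QR.reverse.append Q with hW
  have hWsupp : ∀ w ∈ W.support, w ∈ QR.support ∨ w ∈ Q.support := by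
    intro w hw
    rw [hW] at hw
    rcases (Walk.mem_support_append_iff _ _).mp hw with h | h
    · left; rwa [Walk.support_reverse, List.mem_reverse] at h
    · right; exact h
  have hπpath : W.bypass.IsPath := W.bypass_isPath
  have hπB : ∀ w ∈ W.bypass.support, w ∈ B.verts :=
    block_convex hBG hB hgB hu W.bypass hπpath
  have hπsupp : ∀ w ∈ W.bypass.support, w = g ∨ w = u := by
    intro w hw
    rcases hWsupp w (W.support_bypass_subset hw) with h | h
    · exact Or.inl (honlyR w h (hπB w hw))
    · exact Or.inr (honlyP w h (hπB w hw))
  have hπnotnil : ¬ W.bypass.Nil := Walk.not_nil_of_ne (fun h => hux h.symm)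
  obtain ⟨z, hadj, π', hπeq⟩ := Walk.not_nil_iff.mp hπnotnil
  have hz : z ∈ W.bypass.support := by
    rw [hπeq, Walk.support_cons]
    exact List.mem_cons_of_mem _ π'.start_mem_support
  have hzeq : z = u := by
    rcases hπsupp z hz with h | h
    · exact absurd h hadj.ne'
    · exact h
  have hedge : s(g, z) ∈ W.bypass.edges := by
    rw [hπeq, Walk.edges_cons]; exact List.mem_cons_self
  rw [hzeq] at hedge
  have hedgeW : s(g, u) ∈ W.edges := W.edges_bypass_subset hedge
  rw [hW, Walk.edges_append] at hedgeW
  rcases List.mem_append.mp hedgeW with h | h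
  · rw [Walk.edges_reverse, List.mem_reverse] at h
    have : u ∈ QR.support := QR.snd_mem_support_of_mem_edges h
    exact hux (honlyR u this hu)
  · have : g ∈ Q.support := Q.fst_mem_support_of_mem_edges h
    exact hux ((honlyP g this hgB).symm)
/-- A set reachable from `r` via edges in `E` has at most `|E| + 1` elements. -/
lemma conn_card [Fintype V] (r : V) (E : Set (Sym2 V)) (U : Set V)
    (h : ∀ u ∈ U, ReflTransGen (fun p q => p ≠ q ∧ s(p, q) ∈ E) r u) :
    U.ncard ≤ E.ncard + 1 := by
  classical
  suffices H : ∀ n (E : Set (Sym2 V)) (U : Set V), E.ncard = n →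
      (∀ u ∈ U, ReflTransGen (fun p q => p ≠ q ∧ s(p, q) ∈ E) r u) →
      U.ncard ≤ E.ncard + 1 by
    exact H E.ncard E U rfl h
  clear h E U
  intro n
  induction n using Nat.strong_induction_on with
  | _ n ih =>
  intro E U hn h
  subst hn
  by_cases hU : U ⊆ {r}
  · calc U.ncard ≤ ({r} : Set V).ncard := Set.ncard_le_ncard hU (Set.toFinite _)
    _ = 1 := Set.ncard_singleton r
    _ ≤ E.ncard + 1 := by omega
  · obtain ⟨w, hwU, hwr⟩ : ∃ w ∈ U, w ≠ r := by
      by_contra hcon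
      push_neg at hcon
      exact hU (fun y hy => hcon y hy)
    have hwreach := h w hwU
    obtain ⟨z, hrz, hzw, hf⟩ : ∃ z, ReflTransGen (fun p q => p ≠ q ∧ s(p, q) ∈ E) r z ∧
        z ≠ w ∧ s(z, w) ∈ E := by
      cases hwreach.cases_tail with
      | inl h' => exact absurd h' hwr
      | inr h' => obtain ⟨z, hz, hstep⟩ := h'; exact ⟨z, hz, hstep⟩
    set m : V → V := fun y => if y = w then z else y with hm
    have hmw : m w = z := by simp [hm]
    have hmr : m r = r := by simp [hm, hwr.symm]
    have hmz : m z = z := by simp [hm, hzw]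
    have hmid : ∀ y, y ≠ w → m y = y := fun y hy => by simp [hm, hy]
    set E' : Set (Sym2 V) := (Sym2.map m '' E) \ {e | e.IsDiag} with hE'
    have hE'sub : E' ⊆ Sym2.map m '' (E \ {s(z, w)}) := by
      rintro e' ⟨⟨e, heE, rfl⟩, hnd⟩
      refine ⟨e, ⟨heE, fun hef => ?_⟩, rfl⟩
      rw [Set.mem_singleton_iff] at hef
      subst hef
      exact hnd (by simp [Sym2.map_pair_eq, hmz, hmw])
    have hE'card : E'.ncard + 1 ≤ E.ncard := by
      have h1 : E'.ncard ≤ (E \ {s(z, w)}).ncard :=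
        le_trans (Set.ncard_le_ncard hE'sub (Set.toFinite _)) (Set.ncard_image_le (Set.toFinite _))
      have h2 : (E \ {s(z, w)}).ncard + 1 = E.ncard :=
        Set.ncard_diff_singleton_add_one hf (Set.toFinite _)
      omega
    have hlift : ∀ u ∈ U, ReflTransGen (fun p q => p ≠ q ∧ s(p, q) ∈ E') r (m u) := by
      intro u hu
      have hrw := h u hu
      rw [← hmr]
      clear hwreach hu
      induction hrw with
      | refl => exact .refl
      | tail _ step ihh =>
        rename_i b c _
        by_cases hbc : m b = m c
        · rwa [← hbc]
        · refine ihh.tail ⟨hbc, ?_⟩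
          refine ⟨⟨s(b, c), step.2, by simp [Sym2.map_pair_eq]⟩, ?_⟩
          simp only [Set.mem_setOf_eq, Sym2.map_pair_eq, Sym2.mk_isDiag_iff]
          exact hbc
    have hUcard : U.ncard ≤ (m '' U).ncard + 1 := by
      have hsub : U \ {w} ⊆ m '' U := by
        intro y hy
        exact ⟨y, hy.1, hmid y hy.2⟩
      have h1 : (U \ {w}).ncard ≤ (m '' U).ncard :=
        Set.ncard_le_ncard hsub (Set.toFinite _)
      have h2 : (U \ {w}).ncard + 1 = U.ncard :=
        Set.ncard_diff_singleton_add_one hwU (Set.toFinite _)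
      omega
    have hlt : E'.ncard < E.ncard := by omega
    have := ih E'.ncard hlt E' (m '' U) rfl
      (by rintro u' ⟨u, hu, rfl⟩; exact hlift u hu)
    omega

lemma rtg_mono_rtg {R R' : V → V → Prop} (h : ∀ p q, R p q → ReflTransGen R' p q)
    {a b : V} (hr : ReflTransGen R a b) : ReflTransGen R' a b := by
  induction hr with
  | refl => exact .refl
  | tail _ step ih => exact ih.trans (h _ _ step)

lemma walk_rtg_mem {E : Set (Sym2 V)} {c d : V} (Q : G.Walk c d)
    (hE : ∀ e ∈ Q.edges, e ∈ E) :
    ReflTransGen (fun p q => p ≠ q ∧ s(p, q) ∈ E) c d := by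
  induction Q with
  | nil => exact .refl
  | cons h Q' ih =>
    refine ReflTransGen.head ⟨h.ne, hE _ (by rw [Walk.edges_cons]; exact List.mem_cons_self)⟩
      (ih ?_)
    intro e he
    exact hE e (by rw [Walk.edges_cons]; exact List.mem_cons_of_mem _ he)

/-- From connectivity of a subgraph, a `G`-walk within the subgraph. -/
lemma hwalk {H : G.Subgraph} (hc : H.Connected) {p q : V}
    (hp : p ∈ H.verts) (hq : q ∈ H.verts) :
    ∃ P : G.Walk p q, (∀ e ∈ P.edges, e ∈ H.edgeSet) ∧ ∀ w ∈ P.support, w ∈ H.verts := by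
  have hr := ((connected_iff_rtg H).mp hc).2 p hp q hq
  clear hq
  induction hr with
  | refl =>
    refine ⟨Walk.nil, by simp, ?_⟩
    intro w hw
    simp only [Walk.support_nil, List.mem_singleton] at hw
    exact hw ▸ hp
  | tail _ step ih =>
    obtain ⟨P, hPe, hPs⟩ := ih
    refine ⟨P.concat step.adj_sub, ?_, ?_⟩
    · intro e he
      rw [Walk.edges_concat, List.concat_eq_append] at he
      rcases List.mem_append.mp he with he | he
      · exact hPe e he
      · rw [List.mem_singleton.mp he]; exact Subgraph.mem_edgeSet.mpr step
    · intro w hw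
      rw [Walk.support_concat] at hw
      rcases List.mem_append.mp hw with hw | hw
      · exact hPs w hw
      · rw [List.mem_singleton.mp hw]; exact step.snd_mem

/-- Transport of a subgraph along edge-inclusion into another ambient graph. -/
lemma transport {G₂ : SimpleGraph V} (K : G.Subgraph) (h : ∀ a b, K.Adj a b → G₂.Adj a b) :
    ∃ K' : G₂.Subgraph, K'.verts = K.verts ∧ K'.Adj = K.Adj ∧
      (K.Connected → K'.Connected) ∧ (K'.Connected → K.Connected) ∧ K'.edgeSet = K.edgeSet := by
  refine ⟨⟨K.verts, K.Adj, h _ _, K.edge_vert, K.symm⟩, rfl, rfl, ?_, ?_, ?_⟩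
  · intro hc
    rw [connected_iff_rtg] at hc ⊢
    exact hc
  · intro hc
    rw [connected_iff_rtg] at hc ⊢
    exact hc
  · ext e
    induction e with
    | _ a b => exact Iff.rfl

lemma edge_to_T {T : SimpleGraph V} {v : V} (hT : IsTvG G T v) (hBG : IsBlockGraph G)
    {B : G.Subgraph} (hB : IsBlock G B) {g w : V} (hnear : IsNearest G v B g)
    (hw : w ∈ B.verts) (hwg : w ≠ g) : T.Adj g w := by
  rw [hT]
  refine ⟨(hBG B hB) hnear.1 hw (Ne.symm hwg), ?_⟩
  intro B'' hB'' hadj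
  left
  have heq : B'' = B := block_eq_of_two hB'' hB (Ne.symm hwg) hadj.fst_mem hadj.snd_mem hnear.1 hw
  rw [heq]
  exact hnear

/-- **Main replacement lemma**: any connected subgraph of `G` containing `v` can be
replaced by a connected subgraph of `T` on the same vertex set with no more edges. -/
lemma main [Fintype V] (hG : G.Connected) (hBG : IsBlockGraph G)
    {T : SimpleGraph V} {v : V} (hT : IsTvG G T v) :
    ∀ (H : G.Subgraph), H.Connected → v ∈ H.verts →
      ∃ H' : T.Subgraph, H'.Connected ∧ H'.verts = H.verts ∧
        H'.edgeSet.ncard ≤ H.edgeSet.ncard := by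
  classical
  suffices MAIN : ∀ n (H : G.Subgraph), (H.edgeSet \ T.edgeSet).ncard = n →
      H.Connected → v ∈ H.verts →
      ∃ H' : T.Subgraph, H'.Connected ∧ H'.verts = H.verts ∧
        H'.edgeSet.ncard ≤ H.edgeSet.ncard by
    intro H hc hv; exact MAIN _ H rfl hc hv
  intro n
  induction n using Nat.strong_induction_on with
  | _ n ih =>
  intro H hn hc hv
  rcases Nat.eq_zero_or_pos n with hn0 | hnpos
  · -- no bad edges: transport H into T
    have hempty : H.edgeSet \ T.edgeSet = ∅ := by
      rw [← Set.ncard_eq_zero (Set.toFinite _)] at *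
      omega
    have hHT : ∀ a b, H.Adj a b → T.Adj a b := by
      intro a b hab
      by_contra hnT
      have : s(a, b) ∈ H.edgeSet \ T.edgeSet :=
        ⟨Subgraph.mem_edgeSet.mpr hab, fun hh => hnT (T.mem_edgeSet.mp hh)⟩
      rw [hempty] at this
      exact this
    obtain ⟨K', hv', hadj', hcon', _, hedge'⟩ := transport H hHT
    exact ⟨K', hcon' hc, hv', le_of_eq (by rw [hedge'])⟩
  · -- there is a bad edge
    have hne : (H.edgeSet \ T.edgeSet).Nonempty := by
      rw [← Set.ncard_pos (Set.toFinite _)] at *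
      omega
    obtain ⟨a, b, habH, habT⟩ :
        ∃ a b, s(a, b) ∈ H.edgeSet ∧ s(a, b) ∉ T.edgeSet := by
      obtain ⟨e, heH, heT⟩ := hne
      induction e with
      | _ a b => exact ⟨a, b, heH, heT⟩
    have habAdj : H.Adj a b := Subgraph.mem_edgeSet.mp habH
    have habTAdj : ¬ T.Adj a b := fun hh => habT (T.mem_edgeSet.mpr hh)
    -- find the offending block
    obtain ⟨B, hB, hBadj, hnotn⟩ : ∃ B : G.Subgraph, IsBlock G B ∧ B.Adj a b ∧
        ¬ (IsNearest G v B a ∨ IsNearest G v B b) := by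
      have h2 : ¬ (G.Adj a b ∧ ∀ B : G.Subgraph, IsBlock G B → B.Adj a b →
          (IsNearest G v B a ∨ IsNearest G v B b)) := fun hcl => habTAdj ((hT a b).mpr hcl)
      have h3 := not_and.mp h2 habAdj.adj_sub
      push_neg at h3
      obtain ⟨B, hB, hBadj, hn1, hn2⟩ := h3
      exact ⟨B, hB, hBadj, fun hh => hh.elim hn1 hn2⟩
    push_neg at hnotn
    obtain ⟨hnota, hnotb⟩ := hnotn
    obtain ⟨g, hgB, hgmin, hgate⟩ := gate hG hBG hB v
    have hgnear : IsNearest G v B g := ⟨hgB, hgmin⟩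
    have hga : a ≠ g := fun h => hnota (h ▸ hgnear)
    have hgb : b ≠ g := fun h => hnotb (h ▸ hgnear)
    have haB : a ∈ B.verts := hBadj.fst_mem
    have hbB : b ∈ B.verts := hBadj.snd_mem
    have haH : a ∈ H.verts := habAdj.fst_mem
    have hgH : g ∈ H.verts := by
      obtain ⟨P, hPe, hPs⟩ := hwalk hc hv haH
      exact hPs g (hgate a haB P)
    set Wset : Set V := {w | w ∈ B.verts ∧ w ≠ g ∧ ∃ z, z ∈ B.verts ∧ H.Adj w z} with hWset
    set EB : Set (Sym2 V) := {e | e ∈ H.edgeSet ∧ ∀ z ∈ e, z ∈ B.verts} with hEB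
    set AA : Set (Sym2 V) := {e | e ∈ H.edgeSet ∧ ¬ ∀ z ∈ e, z ∈ B.verts} with hAA
    set SS : Set (Sym2 V) := (fun w => s(g, w)) '' Wset with hSS
    -- Γ-connectivity within the block
    have hreach : ∀ w ∈ Wset, ReflTransGen (fun p q => p ≠ q ∧ s(p, q) ∈ EB) g w := by
      rintro w ⟨hwB, hwg, z, hzB, hwz⟩
      have hwH : w ∈ H.verts := hwz.fst_mem
      obtain ⟨P, hPe, hPs⟩ := hwalk hc hv hwH
      have hgs : g ∈ P.bypass.support := hgate w hwB P.bypass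
      set D := P.bypass.dropUntil g hgs with hD
      have hDpath : D.IsPath := P.bypass_isPath.dropUntil hgs
      have hDB : ∀ y ∈ D.support, y ∈ B.verts := block_convex hBG hB hgB hwB D hDpath
      refine walk_rtg_mem D ?_
      intro e he
      have heH : e ∈ H.edgeSet := hPe e (P.edges_bypass_subset (P.bypass.edges_dropUntil_subset hgs he))
      refine ⟨heH, ?_⟩
      intro y hy
      induction e with
      | _ p q =>
        rcases Sym2.mem_iff.mp hy with rfl | rfl
        · exact hDB y (D.fst_mem_support_of_mem_edges he)
        · exact hDB y (D.snd_mem_support_of_mem_edges he)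
    have hcount : Wset.ncard ≤ EB.ncard := by
      have h1 := conn_card g EB (insert g Wset) ?_
      · have h2 : (insert g Wset).ncard = Wset.ncard + 1 :=
          Set.ncard_insert_of_notMem (fun h => h.2.1 rfl) (Set.toFinite _)
        omega
      · rintro u hu
        rcases Set.mem_insert_iff.mp hu with rfl | hu
        · exact .refl
        · exact hreach u hu
    -- the modified subgraph
    set H₁ : G.Subgraph :=
      { verts := H.verts
        Adj := fun p q => (H.Adj p q ∧ (p ∉ B.verts ∨ q ∉ B.verts)) ∨
          (p = g ∧ q ∈ Wset) ∨ (q = g ∧ p ∈ Wset)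
        adj_sub := by
          rintro p q (⟨h1, _⟩ | ⟨rfl, hq⟩ | ⟨rfl, hp⟩)
          · exact h1.adj_sub
          · exact (hBG B hB) hgB hq.1 (Ne.symm hq.2.1)
          · exact ((hBG B hB) hgB hp.1 (Ne.symm hp.2.1)).symm
        edge_vert := by
          rintro p q (⟨h1, _⟩ | ⟨rfl, hq⟩ | ⟨rfl, hp⟩)
          · exact h1.fst_mem
          · exact hgH
          · obtain ⟨_, _, z, _, hz⟩ := hp
            exact hz.fst_mem
        symm := ⟨by
          rintro p q (⟨h1, h2⟩ | ⟨rfl, hq⟩ | ⟨rfl, hp⟩)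
          · exact Or.inl ⟨h1.symm, h2.symm⟩
          · exact Or.inr (Or.inr ⟨rfl, hq⟩)
          · exact Or.inr (Or.inl ⟨rfl, hp⟩)⟩ } with hH₁
    have hH₁verts : H₁.verts = H.verts := rfl
    -- edge set of H₁
    have memAA : ∀ p q : V, (s(p, q) ∈ AA ↔ (H.Adj p q ∧ (p ∉ B.verts ∨ q ∉ B.verts))) := by
      intro p q
      rw [hAA]
      simp only [Set.mem_setOf_eq, Subgraph.mem_edgeSet]
      constructor
      · rintro ⟨h1, h2⟩
        refine ⟨h1, ?_⟩
        by_contra hcon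
        push_neg at hcon
        refine h2 ?_
        intro z hz
        rcases Sym2.mem_iff.mp hz with rfl | rfl
        · exact hcon.1
        · exact hcon.2
      · rintro ⟨h1, h2⟩
        refine ⟨h1, fun hall => ?_⟩
        rcases h2 with h2 | h2
        · exact h2 (hall p (by simp))
        · exact h2 (hall q (by simp))
    have memSS : ∀ p q : V, (s(p, q) ∈ SS ↔ ((p = g ∧ q ∈ Wset) ∨ (q = g ∧ p ∈ Wset))) := by
      intro p q
      rw [hSS]
      constructor
      · rintro ⟨w, hw, heq⟩
        rcases Sym2.eq_iff.mp heq with ⟨h1, h2⟩ | ⟨h1, h2⟩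
        · exact Or.inl ⟨h1.symm, h2 ▸ hw⟩
        · exact Or.inr ⟨h1.symm, h2 ▸ hw⟩
      · rintro (⟨rfl, hq⟩ | ⟨rfl, hp⟩)
        · exact ⟨q, hq, rfl⟩
        · exact ⟨p, hp, Sym2.eq_swap⟩
    have hchar : H₁.edgeSet = AA ∪ SS := by
      ext e
      induction e with
      | _ p q =>
        rw [Subgraph.mem_edgeSet]
        show ((H.Adj p q ∧ (p ∉ B.verts ∨ q ∉ B.verts)) ∨
          (p = g ∧ q ∈ Wset) ∨ (q = g ∧ p ∈ Wset)) ↔ _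
        rw [Set.mem_union, memAA p q, memSS p q]
    have hEdec : H.edgeSet = AA ∪ EB := by
      ext e
      rw [hAA, hEB]
      simp only [Set.mem_union, Set.mem_setOf_eq]
      tauto
    have hdisjAASS : Disjoint AA SS := by
      rw [Set.disjoint_left]
      rintro f hfAA ⟨w, hw, rfl⟩
      refine hfAA.2 ?_
      intro z hz
      rcases Sym2.mem_iff.mp hz with rfl | rfl
      · exact hgB
      · exact hw.1
    have hdisjAAEB : Disjoint AA EB := by
      rw [Set.disjoint_left]
      rintro f hfAA hfEB
      exact hfAA.2 hfEB.2
    have hH₁count : H₁.edgeSet.ncard ≤ H.edgeSet.ncard := by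
      rw [hchar, hEdec,
        Set.ncard_union_eq hdisjAASS (Set.toFinite _) (Set.toFinite _),
        Set.ncard_union_eq hdisjAAEB (Set.toFinite _) (Set.toFinite _)]
      have : SS.ncard ≤ Wset.ncard := Set.ncard_image_le (Set.toFinite _)
      omega
    -- bad edges strictly decrease
    have hsub : H₁.edgeSet \ T.edgeSet ⊆ H.edgeSet \ T.edgeSet := by
      rintro f ⟨hf1, hf2⟩
      rw [hchar] at hf1
      rcases hf1 with hf1 | hf1
      · exact ⟨hf1.1, hf2⟩
      · obtain ⟨w, hw, rfl⟩ := hf1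
        exact absurd (T.mem_edgeSet.mpr (edge_to_T hT hBG hB hgnear hw.1 hw.2.1)) hf2
    have hnotmem : s(a, b) ∉ H₁.edgeSet \ T.edgeSet := by
      rintro ⟨hf1, _⟩
      rw [hchar] at hf1
      rcases hf1 with hf1 | hf1
      · refine hf1.2 ?_
        intro z hz
        rcases Sym2.mem_iff.mp hz with rfl | rfl
        · exact haB
        · exact hbB
      · rw [memSS a b] at hf1
        rcases hf1 with ⟨h1, _⟩ | ⟨h1, _⟩
        · exact hga h1
        · exact hgb h1
    have hss : H₁.edgeSet \ T.edgeSet ⊂ H.edgeSet \ T.edgeSet := by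
      rw [Set.ssubset_def]
      exact ⟨hsub, fun hcon => hnotmem (hcon ⟨habH, habT⟩)⟩
    -- connectivity of H₁
    have hstep : ∀ p q, H.Adj p q → ReflTransGen H₁.Adj p q := by
      intro p q hadj
      have hne' : p ≠ q := hadj.adj_sub.ne
      by_cases hpq : p ∈ B.verts ∧ q ∈ B.verts
      · by_cases hpg : p = g
        · subst hpg
          exact ReflTransGen.single (Or.inr (Or.inl ⟨rfl,
            ⟨hpq.2, fun h => hne' h.symm, p, hpq.1, hadj.symm⟩⟩))
        · by_cases hqg : q = g
          · subst hqg
            exact ReflTransGen.single (Or.inr (Or.inr ⟨rfl,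
              ⟨hpq.1, hne', q, hpq.2, hadj⟩⟩))
          · have hpW : p ∈ Wset := ⟨hpq.1, hpg, q, hpq.2, hadj⟩
            have hqW : q ∈ Wset := ⟨hpq.2, hqg, p, hpq.1, hadj.symm⟩
            exact ReflTransGen.head (Or.inr (Or.inr ⟨rfl, hpW⟩))
              (ReflTransGen.single (Or.inr (Or.inl ⟨rfl, hqW⟩)))
      · exact ReflTransGen.single (Or.inl ⟨hadj, not_and_or.mp hpq⟩)
    have hH₁conn : H₁.Connected := by
      rw [connected_iff_rtg]
      refine ⟨⟨v, hv⟩, fun p hp q hq => ?_⟩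
      exact rtg_mono_rtg hstep (((connected_iff_rtg H).mp hc).2 p hp q hq)
    -- induction
    have hlt : (H₁.edgeSet \ T.edgeSet).ncard < n :=
      hn ▸ Set.ncard_lt_ncard hss (Set.toFinite _)
    obtain ⟨H', hconn', hverts', hcard'⟩ := ih _ hlt H₁ rfl hH₁conn hv
    exact ⟨H', hconn', hverts', le_trans hcard' hH₁count⟩
lemma top_connected (hG : G.Connected) : (⊤ : G.Subgraph).Connected := by
  rw [connected_iff_rtg]
  refine ⟨?_, ?_⟩
  · obtain ⟨u⟩ := hG.nonempty
    exact ⟨u, by simp⟩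
  · intro a _ b _
    exact (reachable_iff_reflTransGen a b).mp (hG a b)

/-- the set of edge-counts of connected subgraphs containing `S` is nonempty -/
lemma sd_set_nonempty (hG : G.Connected) (S : Set V) :
    {n | ∃ K : G.Subgraph, K.Connected ∧ S ⊆ K.verts ∧ K.edgeSet.ncard = n}.Nonempty :=
  ⟨_, ⊤, top_connected hG, by simp, rfl⟩

lemma steinerTree_iff (hG : G.Connected) (S : Set V) (n : ℕ) :
    (∃ K : G.Subgraph, IsSteinerTree G S K ∧ K.edgeSet.ncard = n) ↔ n = steinerDist G S := by
  unfold steinerDist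
  constructor
  · rintro ⟨K, ⟨hKc, hKs, hKmin⟩, rfl⟩
    refine le_antisymm ?_ (Nat.sInf_le ⟨K, hKc, hKs, rfl⟩)
    obtain ⟨K', hK'c, hK's, hK'n⟩ := Nat.sInf_mem (sd_set_nonempty hG S)
    exact hK'n ▸ hKmin K' hK'c hK's
  · rintro rfl
    obtain ⟨K, hKc, hKs, hKn⟩ := Nat.sInf_mem (sd_set_nonempty hG S)
    exact ⟨K, ⟨hKc, hKs, fun K' hc hs => hKn ▸ Nat.sInf_le ⟨K', hc, hs, rfl⟩⟩, hKn⟩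

theorem assemble [Fintype V] (G : SimpleGraph V) (hG : G.Connected)
    (hBG : IsBlockGraph G) (v : V) (T : SimpleGraph V) (hT : IsTvG G T v)
    (k : ℕ) (hk2 : 2 ≤ k) (hkn : k ≤ Fintype.card V) :
    steinerEcc G k v = steinerEcc T k v := by
  classical
  have hTG : ∀ a b, T.Adj a b → G.Adj a b := fun a b h => ((hT a b).mp h).1
  -- T is connected
  have hTconn : T.Connected := by
    obtain ⟨H', hH'c, hH'v, _⟩ := main hG hBG hT ⊤ (top_connected hG) (by simp)
    have hverts : H'.verts = Set.univ := by rw [hH'v]; simp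
    rw [connected_iff] at *
    refine ⟨?_, hG.2⟩
    intro a b
    rw [reachable_iff_reflTransGen]
    have := ((connected_iff_rtg H').mp hH'c).2 a (by rw [hverts]; trivial)
      b (by rw [hverts]; trivial)
    exact rtgm this (fun p q h => h.adj_sub)
  -- equality of Steiner distances for sets containing v
  have hdist : ∀ S : Set V, v ∈ S → steinerDist G S = steinerDist T S := by
    intro S hvS
    unfold steinerDist
    refine le_antisymm ?_ ?_
    · obtain ⟨K, hKc, hKs, hKn⟩ := Nat.sInf_mem (sd_set_nonempty hTconn S)
      obtain ⟨K', hK'v, _, hc, _, hK'e⟩ := transport K (fun a b h => hTG a b h.adj_sub)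
      calc sInf {n | ∃ K : G.Subgraph, K.Connected ∧ S ⊆ K.verts ∧ K.edgeSet.ncard = n}
          ≤ K'.edgeSet.ncard := Nat.sInf_le ⟨K', hc hKc, hK'v ▸ hKs, rfl⟩
        _ = _ := by rw [hK'e, hKn]
    · obtain ⟨K, hKc, hKs, hKn⟩ := Nat.sInf_mem (sd_set_nonempty hG S)
      obtain ⟨H', hH'c, hH'v, hH'n⟩ := main hG hBG hT K hKc (hKs hvS)
      calc sInf {n | ∃ K : T.Subgraph, K.Connected ∧ S ⊆ K.verts ∧ K.edgeSet.ncard = n}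
          ≤ H'.edgeSet.ncard := Nat.sInf_le ⟨H', hH'c, hH'v ▸ hKs, rfl⟩
        _ ≤ _ := hH'n.trans hKn.le
  -- conclude
  unfold steinerEcc
  congr 1
  ext n
  simp only [Set.mem_setOf_eq]
  constructor
  · rintro ⟨S, hcard, hvS, K, hK, hKn⟩
    refine ⟨S, hcard, hvS, ?_⟩
    have h1 : n = steinerDist G ↑S := (steinerTree_iff hG _ n).mp ⟨K, hK, hKn⟩
    exact (steinerTree_iff hTconn _ n).mpr
      (by rw [h1]; exact hdist (↑S) (by exact_mod_cast hvS))
  · rintro ⟨S, hcard, hvS, K, hK, hKn⟩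
    refine ⟨S, hcard, hvS, ?_⟩
    have h1 : n = steinerDist T ↑S := (steinerTree_iff hTconn _ n).mp ⟨K, hK, hKn⟩
    exact (steinerTree_iff hG _ n).mpr
      (by rw [h1]; exact (hdist (↑S) (by exact_mod_cast hvS)).symm)


end SB5

/-- For a connected block graph `G`, `v ∈ V(G)` and
`2 ≤ k ≤ n(G)`, one has `ecc_k(v,G) = ecc_k(v,T(v,G))`. -/
theorem steiner_stmt_5 [Fintype V] (G : SimpleGraph V) (hG : G.Connected)
    (hBG : IsBlockGraph G) (v : V) (T : SimpleGraph V) (hT : IsTvG G T v)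
    (k : ℕ) (hk2 : 2 ≤ k) (hkn : k ≤ Fintype.card V) :
    steinerEcc G k v = steinerEcc T k v := by
  exact SB5.assemble G hG hBG v T hT k hk2 hkn
end

section
/- There exist a connected unicyclic graph G (a connected graph whose number of edges equals its number of vertices, equivalently cyclomatic number 1) and a vertex v ∈ V(G) such that no Steiner 3-ecc v-tree of G contains a Steiner 2-ecc v-tree of G as a subgraph; that is, the property that every Steiner k-ecc v-tree contains a Steiner (k−1)-ecc v-tree fails already on unicyclic graphs for k = 3. -/
open SimpleGraph

variable {V : Type*}

namespace Stmt11

def E9 : Fin 9 → Fin 9 × Fin 9 :=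
  ![(0,1),(1,2),(2,3),(3,4),(4,5),(5,6),(6,0),(0,7),(2,8)]

def adj9 (a b : Fin 9) : Prop := a ≠ b ∧ ∃ i : Fin 9, E9 i = (a,b) ∨ E9 i = (b,a)

instance : DecidableRel adj9 := fun _ _ => instDecidableAnd

def G9 : SimpleGraph (Fin 9) where
  Adj := adj9
  symm := ⟨fun a b h => by revert a b h; decide⟩
  loopless := ⟨fun a h => by revert a h; decide⟩

instance : DecidableRel G9.Adj := fun a b => inferInstanceAs (Decidable (adj9 a b))

def sidx (i : Fin 9) : Sym2 (Fin 9) := s((E9 i).1, (E9 i).2)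

lemma adj_iff_exists : ∀ a b : Fin 9, G9.Adj a b ↔ ∃ i, sidx i = s(a,b) := by decide

lemma sidx_inj : Function.Injective sidx := by decide

/-! ### Bitmask reachability -/

def eL : List (ℕ × ℕ × ℕ) :=
  [(0,0,1),(1,1,2),(2,2,3),(3,3,4),(4,4,5),(5,5,6),(6,6,0),(7,0,7),(8,2,8)]

def stepOne (m t : ℕ) (e : ℕ × ℕ × ℕ) : ℕ :=
  (t ||| (if m.testBit e.1 ∧ t.testBit e.2.1 then 2 ^ e.2.2 else 0)) |||
    (if m.testBit e.1 ∧ t.testBit e.2.2 then 2 ^ e.2.1 else 0)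

def stepN (m t : ℕ) : ℕ := eL.foldl (stepOne m) t

def reachN (m a b : ℕ) : Prop := ((stepN m)^[8] (2 ^ a)).testBit b = true

instance : ∀ m a b, Decidable (reachN m a b) := fun _ _ _ =>
  inferInstanceAs (Decidable (_ = _))

lemma stepOne_mono {m t j : ℕ} {e : ℕ × ℕ × ℕ} (h : t.testBit j = true) :
    (stepOne m t e).testBit j = true := by
  simp [stepOne, Nat.testBit_lor, h]

lemma foldl_mono {m j : ℕ} : ∀ (l : List (ℕ × ℕ × ℕ)) (t : ℕ), t.testBit j = true →
    (l.foldl (stepOne m) t).testBit j = true := by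
  intro l
  induction l with
  | nil => exact fun t h => h
  | cons e l ih => exact fun t h => ih _ (stepOne_mono h)

lemma stepOne_add1 {m t : ℕ} {e : ℕ × ℕ × ℕ} (hm : m.testBit e.1 = true)
    (ha : t.testBit e.2.1 = true) : (stepOne m t e).testBit e.2.2 = true := by
  simp [stepOne, Nat.testBit_lor, hm, ha, Nat.testBit_two_pow_self]

lemma stepOne_add2 {m t : ℕ} {e : ℕ × ℕ × ℕ} (hm : m.testBit e.1 = true)
    (ha : t.testBit e.2.2 = true) : (stepOne m t e).testBit e.2.1 = true := by
  simp [stepOne, Nat.testBit_lor, hm, ha, Nat.testBit_two_pow_self]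

lemma foldl_add {m : ℕ} {e : ℕ × ℕ × ℕ} (hm : m.testBit e.1 = true) :
    ∀ (l : List (ℕ × ℕ × ℕ)), e ∈ l → ∀ t : ℕ,
      (t.testBit e.2.1 = true → (l.foldl (stepOne m) t).testBit e.2.2 = true) ∧
      (t.testBit e.2.2 = true → (l.foldl (stepOne m) t).testBit e.2.1 = true) := by
  intro l
  induction l with
  | nil => intro h; cases h
  | cons f l ih =>
    intro hmem t
    rcases List.mem_cons.1 hmem with rfl | hmem
    · exact ⟨fun h => foldl_mono l _ (stepOne_add1 hm h),
        fun h => foldl_mono l _ (stepOne_add2 hm h)⟩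
    · exact ⟨fun h => (ih hmem _).1 (stepOne_mono h),
        fun h => (ih hmem _).2 (stepOne_mono h)⟩

lemma iterate_mono {m j : ℕ} : ∀ (n : ℕ) (t : ℕ), t.testBit j = true →
    ((stepN m)^[n] t).testBit j = true := by
  intro n
  induction n with
  | zero => exact fun t h => h
  | succ n ih =>
    intro t h
    rw [Function.iterate_succ_apply]
    exact ih _ (foldl_mono _ _ h)

/-! ### Subgraph edge index sets -/

open Classical in
noncomputable def sT (T' : G9.Subgraph) : Finset (Fin 9) :=
  Finset.univ.filter (fun i => sidx i ∈ T'.edgeSet)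

lemma mem_sT {T' : G9.Subgraph} {i : Fin 9} : i ∈ sT T' ↔ sidx i ∈ T'.edgeSet := by
  classical
  simp [sT]

def maskOf (s : Finset (Fin 9)) : ℕ := ∑ i ∈ s, 2 ^ (i : ℕ)

set_option maxRecDepth 10000 in
lemma maskOf_testBit : ∀ (s : Finset (Fin 9)) (i : Fin 9),
    (maskOf s).testBit (i : ℕ) = true ↔ i ∈ s := by decide

lemma eL_mem : ∀ i : Fin 9, ((i : ℕ), ((E9 i).1 : ℕ), ((E9 i).2 : ℕ)) ∈ eL := by decide

lemma exists_idx : ∀ e ∈ G9.edgeSet, ∃ i, sidx i = e := by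
  intro e
  induction e with
  | _ a b => exact fun he => (adj_iff_exists a b).1 ((SimpleGraph.mem_edgeSet G9).mp he)

lemma card_eq (T' : G9.Subgraph) : T'.edgeSet.ncard = (sT T').card := by
  have himg : T'.edgeSet = ↑((sT T').image sidx) := by
    ext e
    constructor
    · intro he
      obtain ⟨i, hi⟩ := exists_idx e (T'.edgeSet_subset he)
      exact Finset.mem_coe.2 (Finset.mem_image.2 ⟨i, mem_sT.2 (hi ▸ he), hi⟩)
    · intro he
      obtain ⟨i, hi, rfl⟩ := Finset.mem_image.1 (Finset.mem_coe.1 he)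
      exact mem_sT.1 hi
  rw [himg, Set.ncard_coe_finset, Finset.card_image_of_injective _ sidx_inj]


noncomputable def mT (T' : G9.Subgraph) : ℕ := maskOf (sT T')

lemma step_adj {T' : G9.Subgraph} {a b : Fin 9} (hadj : T'.Adj a b) {t : ℕ}
    (ht : t.testBit (a : ℕ) = true) : (stepN (mT T') t).testBit (b : ℕ) = true := by
  obtain ⟨i, hi⟩ := (adj_iff_exists a b).1 (hadj.adj_sub)
  have hiT : i ∈ sT T' := mem_sT.2 (by rw [hi]; exact SimpleGraph.Subgraph.mem_edgeSet.2 hadj)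
  have hm : (mT T').testBit ((i : ℕ), ((E9 i).1 : ℕ), ((E9 i).2 : ℕ)).1 = true :=
    (maskOf_testBit _ i).2 hiT
  have hmem := eL_mem i
  rcases Sym2.eq_iff.1 hi with ⟨h1, h2⟩ | ⟨h1, h2⟩
  · have := (foldl_add hm eL hmem t).1 (by simpa [h1] using ht)
    simpa [h2, stepN] using this
  · have := (foldl_add hm eL hmem t).2 (by simpa [h2] using ht)
    simpa [h1, stepN] using this

lemma walk_reach (T' : G9.Subgraph) {x y : T'.verts} (p : T'.coe.Walk x y) :
    ∀ (n t : ℕ), p.length ≤ n → t.testBit ((x : Fin 9) : ℕ) = true →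
      ((stepN (mT T'))^[n] t).testBit ((y : Fin 9) : ℕ) = true := by
  induction p with
  | nil => exact fun n t _ ht => iterate_mono n t ht
  | @cons x x' y h q ih =>
    intro n t hn ht
    cases n with
    | zero => simp at hn
    | succ n =>
      rw [Function.iterate_succ_apply]
      exact ih n _ (by simpa using hn) (step_adj h ht)

lemma bridge (T' : G9.Subgraph) (hc : T'.Connected) {a b : Fin 9}
    (ha : a ∈ T'.verts) (hb : b ∈ T'.verts) : reachN (mT T') (a : ℕ) (b : ℕ) := by
  haveI : Fintype ↥T'.verts := Fintype.ofFinite _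
  obtain ⟨p⟩ := hc.preconnected ⟨a, ha⟩ ⟨b, hb⟩
  have hlen : p.toPath.1.length ≤ 8 := by
    have h1 := SimpleGraph.Walk.IsPath.length_lt p.toPath.2
    have h2 : Fintype.card ↥T'.verts ≤ 9 := by
      simpa using Fintype.card_le_of_injective _ (Subtype.val_injective (p := (· ∈ T'.verts)))
    omega
  exact walk_reach T' p.toPath.1 8 _ hlen Nat.testBit_two_pow_self


set_option maxRecDepth 1000000 in
lemma F2lower : ∀ s : Finset (Fin 9), s.card ≤ 3 → ¬ reachN (maskOf s) 4 7 := by decide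

set_option maxRecDepth 1000000 in
set_option maxHeartbeats 2000000 in
lemma F3lower : ∀ s : Finset (Fin 9), s.card ≤ 5 →
    ¬ (reachN (maskOf s) 4 7 ∧ reachN (maskOf s) 4 8) := by decide

set_option maxRecDepth 1000000 in
lemma F2uniq : ∀ s : Finset (Fin 9), s.card = 4 → reachN (maskOf s) 4 7 →
    s = {4, 5, 6, 7} := by decide

set_option maxRecDepth 1000000 in
set_option maxHeartbeats 2000000 in
lemma F3uniq : ∀ s : Finset (Fin 9), s.card = 6 → reachN (maskOf s) 4 7 →
    reachN (maskOf s) 4 8 → s = {0, 1, 2, 3, 7, 8} := by decide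

set_option maxRecDepth 1000000 in
lemma D2full : ∀ S : Finset (Fin 9), S.card = 2 → 4 ∈ S →
    S ⊆ {1, 2, 3, 4} ∨ S ⊆ {7, 0, 6, 5, 4} ∨ S ⊆ {2, 3, 4, 8} := by decide

set_option maxRecDepth 1000000 in
lemma D2ne : ∀ S : Finset (Fin 9), S.card = 2 → 4 ∈ S → S ≠ {4, 7} →
    S ⊆ {1, 2, 3, 4} ∨ S ⊆ {4, 5, 6, 0} ∨ S ⊆ {2, 3, 4, 8} := by decide

set_option maxRecDepth 1000000 in
lemma D3ne : ∀ S : Finset (Fin 9), S.card = 3 → 4 ∈ S → S ≠ {4, 7, 8} →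
    S ⊆ {7, 0, 1, 2, 3, 4} ∨ S ⊆ {7, 0, 6, 5, 4} ∨ S ⊆ {0, 1, 2, 8, 3, 4} ∨
    S ⊆ {8, 2, 3, 4, 5, 6} ∨ S ⊆ {1, 2, 3, 4, 5} ∨ S ⊆ {6, 0, 1, 2, 3, 4} := by decide

set_option maxRecDepth 1000000 in
lemma D3full : ∀ S : Finset (Fin 9), S.card = 3 → 4 ∈ S →
    S ⊆ {7, 0, 1, 2, 3, 4} ∨ S ⊆ {7, 0, 6, 5, 4} ∨ S ⊆ {0, 1, 2, 8, 3, 4} ∨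
    S ⊆ {8, 2, 3, 4, 5, 6} ∨ S ⊆ {1, 2, 3, 4, 5} ∨ S ⊆ {6, 0, 1, 2, 3, 4} ∨
    S ⊆ {7, 0, 1, 2, 8, 3, 4} := by decide


/-! ### Walks -/

open SimpleGraph.Walk in
def w2a : G9.Walk 1 4 :=
  cons (show G9.Adj 1 2 by decide) (cons (show G9.Adj 2 3 by decide)
    (cons (show G9.Adj 3 4 by decide) nil))

open SimpleGraph.Walk in
def w2b : G9.Walk 7 4 :=
  cons (show G9.Adj 7 0 by decide) (cons (show G9.Adj 0 6 by decide)
    (cons (show G9.Adj 6 5 by decide) (cons (show G9.Adj 5 4 by decide) nil)))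

open SimpleGraph.Walk in
def w2c : G9.Walk 8 4 :=
  cons (show G9.Adj 8 2 by decide) (cons (show G9.Adj 2 3 by decide)
    (cons (show G9.Adj 3 4 by decide) nil))

open SimpleGraph.Walk in
def w2d : G9.Walk 0 4 :=
  cons (show G9.Adj 0 6 by decide) (cons (show G9.Adj 6 5 by decide)
    (cons (show G9.Adj 5 4 by decide) nil))

open SimpleGraph.Walk in
def w3a : G9.Walk 7 4 :=
  cons (show G9.Adj 7 0 by decide) (cons (show G9.Adj 0 1 by decide)
    (cons (show G9.Adj 1 2 by decide) (cons (show G9.Adj 2 3 by decide)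
      (cons (show G9.Adj 3 4 by decide) nil))))

open SimpleGraph.Walk in
def w3c : G9.Walk 0 4 :=
  cons (show G9.Adj 0 1 by decide) (cons (show G9.Adj 1 2 by decide)
    (cons (show G9.Adj 2 8 by decide) (cons (show G9.Adj 8 2 by decide)
      (cons (show G9.Adj 2 3 by decide) (cons (show G9.Adj 3 4 by decide) nil)))))

open SimpleGraph.Walk in
def w3d : G9.Walk 8 6 :=
  cons (show G9.Adj 8 2 by decide) (cons (show G9.Adj 2 3 by decide)
    (cons (show G9.Adj 3 4 by decide) (cons (show G9.Adj 4 5 by decide)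
      (cons (show G9.Adj 5 6 by decide) nil))))

open SimpleGraph.Walk in
def w3h : G9.Walk 1 5 :=
  cons (show G9.Adj 1 2 by decide) (cons (show G9.Adj 2 3 by decide)
    (cons (show G9.Adj 3 4 by decide) (cons (show G9.Adj 4 5 by decide) nil)))

open SimpleGraph.Walk in
def w3j : G9.Walk 6 4 :=
  cons (show G9.Adj 6 0 by decide) (cons (show G9.Adj 0 1 by decide)
    (cons (show G9.Adj 1 2 by decide) (cons (show G9.Adj 2 3 by decide)
      (cons (show G9.Adj 3 4 by decide) nil))))

open SimpleGraph.Walk in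
def w3e : G9.Walk 7 4 :=
  cons (show G9.Adj 7 0 by decide) (cons (show G9.Adj 0 1 by decide)
    (cons (show G9.Adj 1 2 by decide) (cons (show G9.Adj 2 8 by decide)
      (cons (show G9.Adj 8 2 by decide) (cons (show G9.Adj 2 3 by decide)
        (cons (show G9.Adj 3 4 by decide) nil))))))

/-! ### Steiner helpers -/

lemma ncard_walk {u v : Fin 9} (w : G9.Walk u v) :
    w.toSubgraph.edgeSet.ncard = w.edges.toFinset.card := by
  have : w.toSubgraph.edgeSet = ↑w.edges.toFinset := by
    rw [SimpleGraph.Walk.edgeSet_toSubgraph]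
    ext e
    simp
  rw [this, Set.ncard_coe_finset]

lemma verts_of_subset {S : Finset (Fin 9)} {u v : Fin 9} (w : G9.Walk u v)
    (h : ∀ x ∈ S, x ∈ w.support) : ↑S ⊆ w.toSubgraph.verts :=
  fun x hx => (w.mem_verts_toSubgraph).2 (h x hx)

lemma steiner_upper {S : Finset (Fin 9)} {T : G9.Subgraph} (hT : IsSteinerTree G9 ↑S T)
    {u v : Fin 9} (w : G9.Walk u v) (h : ∀ x ∈ S, x ∈ w.support) :
    T.edgeSet.ncard ≤ w.edges.toFinset.card := by
  have := hT.2.2 w.toSubgraph w.toSubgraph_connected (verts_of_subset w h)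
  rwa [ncard_walk] at this

lemma fin_val_four : ((4 : Fin 9) : ℕ) = 4 := rfl
lemma fin_val_seven : ((7 : Fin 9) : ℕ) = 7 := rfl
lemma fin_val_eight : ((8 : Fin 9) : ℕ) = 8 := rfl

lemma lower2 (T' : G9.Subgraph) (hc : T'.Connected) (h4 : (4 : Fin 9) ∈ T'.verts)
    (h7 : (7 : Fin 9) ∈ T'.verts) : 4 ≤ T'.edgeSet.ncard := by
  by_contra h
  push_neg at h
  have hr := bridge T' hc h4 h7
  rw [fin_val_four, fin_val_seven] at hr
  exact F2lower (sT T') (by rw [card_eq] at h; omega) hr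

lemma lower3 (T' : G9.Subgraph) (hc : T'.Connected) (h4 : (4 : Fin 9) ∈ T'.verts)
    (h7 : (7 : Fin 9) ∈ T'.verts) (h8 : (8 : Fin 9) ∈ T'.verts) :
    6 ≤ T'.edgeSet.ncard := by
  by_contra h
  push_neg at h
  have hr7 := bridge T' hc h4 h7
  have hr8 := bridge T' hc h4 h8
  rw [fin_val_four, fin_val_seven] at hr7
  rw [fin_val_four, fin_val_eight] at hr8
  exact F3lower (sT T') (by rw [card_eq] at h; omega) ⟨hr7, hr8⟩


/-! ### support and edge facts -/

lemma sup2a : ∀ x ∈ ({1,2,3,4} : Finset (Fin 9)), x ∈ w2a.support := by decide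
lemma sup2b : ∀ x ∈ ({7,0,6,5,4} : Finset (Fin 9)), x ∈ w2b.support := by decide
lemma sup2c : ∀ x ∈ ({2,3,4,8} : Finset (Fin 9)), x ∈ w2c.support := by decide
lemma sup2d : ∀ x ∈ ({4,5,6,0} : Finset (Fin 9)), x ∈ w2d.support := by decide
lemma sup3a : ∀ x ∈ ({7,0,1,2,3,4} : Finset (Fin 9)), x ∈ w3a.support := by decide
lemma sup3c : ∀ x ∈ ({0,1,2,8,3,4} : Finset (Fin 9)), x ∈ w3c.support := by decide
lemma sup3d : ∀ x ∈ ({8,2,3,4,5,6} : Finset (Fin 9)), x ∈ w3d.support := by decide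
lemma sup3h : ∀ x ∈ ({1,2,3,4,5} : Finset (Fin 9)), x ∈ w3h.support := by decide
lemma sup3j : ∀ x ∈ ({6,0,1,2,3,4} : Finset (Fin 9)), x ∈ w3j.support := by decide
lemma sup3e : ∀ x ∈ ({7,0,1,2,8,3,4} : Finset (Fin 9)), x ∈ w3e.support := by decide

lemma card2a : w2a.edges.toFinset.card = 3 := by decide
lemma card2b : w2b.edges.toFinset.card = 4 := by decide
lemma card2c : w2c.edges.toFinset.card = 3 := by decide
lemma card2d : w2d.edges.toFinset.card = 3 := by decide
lemma card3a : w3a.edges.toFinset.card = 5 := by decide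
lemma card3c : w3c.edges.toFinset.card = 5 := by decide
lemma card3d : w3d.edges.toFinset.card = 5 := by decide
lemma card3h : w3h.edges.toFinset.card = 4 := by decide
lemma card3j : w3j.edges.toFinset.card = 5 := by decide
lemma card3e : w3e.edges.toFinset.card = 6 := by decide

/-! ### the two eccentricities -/

lemma supS2 : ∀ x ∈ ({4,7} : Finset (Fin 9)), x ∈ w2b.support := by decide
lemma supS3 : ∀ x ∈ ({4,7,8} : Finset (Fin 9)), x ∈ w3e.support := by decide

lemma steiner_w2b : IsSteinerTree G9 ↑({4,7} : Finset (Fin 9)) w2b.toSubgraph := by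
  refine ⟨w2b.toSubgraph_connected,
    verts_of_subset w2b supS2, ?_⟩
  intro T' hc hsub
  have h4 : (4 : Fin 9) ∈ T'.verts := hsub (by simp)
  have h7 : (7 : Fin 9) ∈ T'.verts := hsub (by simp)
  rw [ncard_walk, card2b]
  exact lower2 T' hc h4 h7

lemma steiner_w3e : IsSteinerTree G9 ↑({4,7,8} : Finset (Fin 9)) w3e.toSubgraph := by
  refine ⟨w3e.toSubgraph_connected,
    verts_of_subset w3e supS3, ?_⟩
  intro T' hc hsub
  have h4 : (4 : Fin 9) ∈ T'.verts := hsub (by simp)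
  have h7 : (7 : Fin 9) ∈ T'.verts := hsub (by simp)
  have h8 : (8 : Fin 9) ∈ T'.verts := hsub (by simp)
  rw [ncard_walk, card3e]
  exact lower3 T' hc h4 h7 h8

lemma ecc2 : steinerEcc G9 2 4 = 4 := by
  have hub : ∀ n ∈ { n | ∃ S : Finset (Fin 9), S.card = 2 ∧ (4 : Fin 9) ∈ S ∧
      ∃ T : G9.Subgraph, IsSteinerTree G9 ↑S T ∧ T.edgeSet.ncard = n }, n ≤ 4 := by
    rintro n ⟨S, hS2, h4S, T, hT, rfl⟩
    rcases D2full S hS2 h4S with h | h | h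
    · have := steiner_upper hT w2a (fun x hx => sup2a x (h hx)); have hcc := card2a; omega
    · have := steiner_upper hT w2b (fun x hx => sup2b x (h hx)); have hcc := card2b; omega
    · have := steiner_upper hT w2c (fun x hx => sup2c x (h hx)); have hcc := card2c; omega
  have hmem : 4 ∈ { n | ∃ S : Finset (Fin 9), S.card = 2 ∧ (4 : Fin 9) ∈ S ∧
      ∃ T : G9.Subgraph, IsSteinerTree G9 ↑S T ∧ T.edgeSet.ncard = n } :=
    ⟨{4,7}, by decide, by decide, w2b.toSubgraph, steiner_w2b, by rw [ncard_walk, card2b]⟩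
  exact le_antisymm (csSup_le ⟨4, hmem⟩ hub) (le_csSup ⟨4, hub⟩ hmem)

lemma ecc3 : steinerEcc G9 3 4 = 6 := by
  have hub : ∀ n ∈ { n | ∃ S : Finset (Fin 9), S.card = 3 ∧ (4 : Fin 9) ∈ S ∧
      ∃ T : G9.Subgraph, IsSteinerTree G9 ↑S T ∧ T.edgeSet.ncard = n }, n ≤ 6 := by
    rintro n ⟨S, hS3, h4S, T, hT, rfl⟩
    rcases D3full S hS3 h4S with h | h | h | h | h | h | h
    · have := steiner_upper hT w3a (fun x hx => sup3a x (h hx)); have hcc := card3a; omega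
    · have := steiner_upper hT w2b (fun x hx => sup2b x (h hx)); have hcc := card2b; omega
    · have := steiner_upper hT w3c (fun x hx => sup3c x (h hx)); have hcc := card3c; omega
    · have := steiner_upper hT w3d (fun x hx => sup3d x (h hx)); have hcc := card3d; omega
    · have := steiner_upper hT w3h (fun x hx => sup3h x (h hx)); have hcc := card3h; omega
    · have := steiner_upper hT w3j (fun x hx => sup3j x (h hx)); have hcc := card3j; omega
    · have := steiner_upper hT w3e (fun x hx => sup3e x (h hx)); have hcc := card3e; omega
  have hmem : 6 ∈ { n | ∃ S : Finset (Fin 9), S.card = 3 ∧ (4 : Fin 9) ∈ S ∧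
      ∃ T : G9.Subgraph, IsSteinerTree G9 ↑S T ∧ T.edgeSet.ncard = n } :=
    ⟨{4,7,8}, by decide, by decide, w3e.toSubgraph, steiner_w3e, by rw [ncard_walk, card3e]⟩
  exact le_antisymm (csSup_le ⟨6, hmem⟩ hub) (le_csSup ⟨6, hub⟩ hmem)

/-! ### the main argument -/

lemma main : ∀ T₃ : G9.Subgraph, IsSteinerKEccTree G9 3 4 T₃ →
    ∀ T₂ : G9.Subgraph, IsSteinerKEccTree G9 2 4 T₂ → ¬ T₂ ≤ T₃ := by
  rintro T₃ ⟨S₃, hS3, h4S3, hst3, hn3⟩ T₂ ⟨S₂, hS2, h4S2, hst2, hn2⟩ hle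
  rw [ecc3] at hn3
  rw [ecc2] at hn2
  have hS2eq : S₂ = {4,7} := by
    by_contra hne
    have h3 : T₂.edgeSet.ncard ≤ 3 := by
      rcases D2ne S₂ hS2 h4S2 hne with h | h | h
      · have := steiner_upper hst2 w2a (fun x hx => sup2a x (h hx)); have hcc := card2a; omega
      · have := steiner_upper hst2 w2d (fun x hx => sup2d x (h hx)); have hcc := card2d; omega
      · have := steiner_upper hst2 w2c (fun x hx => sup2c x (h hx)); have hcc := card2c; omega
    omega
  have hS3eq : S₃ = {4,7,8} := by
    by_contra hne
    have h5 : T₃.edgeSet.ncard ≤ 5 := by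
      rcases D3ne S₃ hS3 h4S3 hne with h | h | h | h | h | h
      · have := steiner_upper hst3 w3a (fun x hx => sup3a x (h hx)); have hcc := card3a; omega
      · have := steiner_upper hst3 w2b (fun x hx => sup2b x (h hx)); have hcc := card2b; omega
      · have := steiner_upper hst3 w3c (fun x hx => sup3c x (h hx)); have hcc := card3c; omega
      · have := steiner_upper hst3 w3d (fun x hx => sup3d x (h hx)); have hcc := card3d; omega
      · have := steiner_upper hst3 w3h (fun x hx => sup3h x (h hx)); have hcc := card3h; omega
      · have := steiner_upper hst3 w3j (fun x hx => sup3j x (h hx)); have hcc := card3j; omega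
    omega
  have h4v2 : (4 : Fin 9) ∈ T₂.verts := hst2.2.1 (by rw [hS2eq]; simp)
  have h7v2 : (7 : Fin 9) ∈ T₂.verts := hst2.2.1 (by rw [hS2eq]; simp)
  have hr2 := bridge T₂ hst2.1 h4v2 h7v2
  rw [fin_val_four, fin_val_seven] at hr2
  have huniq2 := F2uniq (sT T₂) (by rw [← card_eq]; exact hn2) hr2
  have h4v3 : (4 : Fin 9) ∈ T₃.verts := hst3.2.1 (by rw [hS3eq]; simp)
  have h7v3 : (7 : Fin 9) ∈ T₃.verts := hst3.2.1 (by rw [hS3eq]; simp)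
  have h8v3 : (8 : Fin 9) ∈ T₃.verts := hst3.2.1 (by rw [hS3eq]; simp)
  have hr37 := bridge T₃ hst3.1 h4v3 h7v3
  have hr38 := bridge T₃ hst3.1 h4v3 h8v3
  rw [fin_val_four, fin_val_seven] at hr37
  rw [fin_val_four, fin_val_eight] at hr38
  have huniq3 := F3uniq (sT T₃) (by rw [← card_eq]; exact hn3) hr37 hr38
  have h45 : sidx 4 ∈ T₂.edgeSet := mem_sT.1 (by rw [huniq2]; decide)
  have h45' : sidx 4 ∈ T₃.edgeSet := SimpleGraph.Subgraph.edgeSet_mono hle h45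
  have h4m : (4 : Fin 9) ∈ sT T₃ := mem_sT.2 h45'
  rw [huniq3] at h4m
  exact absurd h4m (by decide)

/-! ### global graph facts -/

lemma adj_E9 : ∀ i : Fin 9, G9.Adj (E9 i).1 (E9 i).2 := by decide

lemma conn9 : G9.Connected := by
  rw [SimpleGraph.connected_iff]
  have r1 : G9.Reachable 1 0 := (show G9.Adj 1 0 by decide).reachable
  have r2 : G9.Reachable 2 0 := ((show G9.Adj 2 1 by decide).reachable).trans r1
  have r3 : G9.Reachable 3 0 := ((show G9.Adj 3 2 by decide).reachable).trans r2
  have r4 : G9.Reachable 4 0 := ((show G9.Adj 4 3 by decide).reachable).trans r3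
  have r6 : G9.Reachable 6 0 := (show G9.Adj 6 0 by decide).reachable
  have r5 : G9.Reachable 5 0 := ((show G9.Adj 5 6 by decide).reachable).trans r6
  have r7 : G9.Reachable 7 0 := (show G9.Adj 7 0 by decide).reachable
  have r8 : G9.Reachable 8 0 := ((show G9.Adj 8 2 by decide).reachable).trans r2
  have h : ∀ a : Fin 9, G9.Reachable a 0 := by
    intro a
    fin_cases a
    exacts [Reachable.refl _, r1, r2, r3, r4, r5, r6, r7, r8]
  exact ⟨fun a b => (h a).trans (h b).symm, ⟨0⟩⟩

lemma count9 : G9.edgeSet.ncard = 9 := by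
  have himg : G9.edgeSet = ↑(Finset.univ.image sidx) := by
    ext e
    simp only [Finset.coe_image, Finset.coe_univ, Set.image_univ, Set.mem_range]
    constructor
    · intro he
      exact exists_idx e he
    · rintro ⟨i, rfl⟩
      exact (SimpleGraph.mem_edgeSet G9).2 (adj_E9 i)
  rw [himg, Set.ncard_coe_finset]
  decide

end Stmt11

/-- There are a connected unicyclic graph `G` and a vertex `v`
such that no Steiner `3`-ecc `v`-tree of `G` contains a Steiner `2`-ecc `v`-tree
of `G` as a subgraph. -/
theorem steiner_stmt_11 :
    ∃ (V : Type) (_ : Fintype V) (G : SimpleGraph V) (v : V),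
      G.Connected ∧ G.edgeSet.ncard = Fintype.card V ∧
      ∀ T₃ : G.Subgraph, IsSteinerKEccTree G 3 v T₃ →
        ∀ T₂ : G.Subgraph, IsSteinerKEccTree G 2 v T₂ → ¬ T₂ ≤ T₃ := by
  refine ⟨Fin 9, inferInstance, Stmt11.G9, 4, Stmt11.conn9, ?_, Stmt11.main⟩
  rw [Stmt11.count9, Fintype.card_fin]
end
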